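/- arXiv:2602.00435 — 6 statements merged into one kernel-verified Lean document; each statement's English description precedes it below -/
import Mathlib

section
/- For any s ≥ 2, the set W(s) of s-well approximable numbers is contained in the set of reals in [0,1] with effective (Kolmogorov/constructive) dimension at most 2/s. -/
open Filter Set

noncomputable section

/-- A gauge function: continuous, non-decreasing, positive on ℝ⁺, tending to 0 at 0⁺. -/
def IsGauge (f : ℝ → ℝ) : Prop :=
  ContinuousOn f (Set.Ioi 0) ∧ (∀ x : ℝ, 0 < x → 0 < f x) ∧
  MonotoneOn f (Set.Ioi 0) ∧
  Filter.Tendsto f (nhdsWithin 0 (Set.Ioi 0)) (nhds 0)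

/-- `f ≤* g` : `f ≤ g` on some interval `(0, δ)`. -/
def LeStar (f g : ℝ → ℝ) : Prop := ∃ δ : ℝ, 0 < δ ∧ ∀ x : ℝ, 0 < x → x < δ → f x ≤ g x

/-- `x ↦ f(x)/x` is monotonically decreasing on `(0, ∞)`. -/
def RatioDecreasing (f : ℝ → ℝ) : Prop := AntitoneOn (fun x => f x / x) (Set.Ioi 0)

/-- Codes for partial computable functions relative to an oracle. -/
inductive OCode : Type
  | zero | succ | left | right | oracle
  | pair (a b : OCode) | comp (a b : OCode) | prec (a b : OCode) | rfind' (a : OCode)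

def OCode.eval (g : ℕ →. ℕ) : OCode → ℕ →. ℕ
  | .zero => fun _ => Part.some 0
  | .succ => fun n => Part.some (n + 1)
  | .left => fun n => Part.some n.unpair.1
  | .right => fun n => Part.some n.unpair.2
  | .oracle => g
  | .pair cf cg => fun n => Nat.pair <$> OCode.eval g cf n <*> OCode.eval g cg n
  | .comp cf cg => fun n => OCode.eval g cg n >>= OCode.eval g cf
  | .prec cf cg => Nat.unpaired fun a n =>
      n.rec (OCode.eval g cf a) fun y IH => do
        let i ← IH
        OCode.eval g cg (Nat.pair a (Nat.pair y i))
  | .rfind' cf => Nat.unpaired fun a m =>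
      (Nat.rfind fun n => (fun x => x = 0) <$> OCode.eval g cf (Nat.pair a (n + m))).map (· + m)

def OCode.encode : OCode → ℕ
  | .zero => 0
  | .succ => 1
  | .left => 2
  | .right => 3
  | .oracle => 4
  | .pair a b => 5 + 4 * Nat.pair a.encode b.encode + 0
  | .comp a b => 5 + 4 * Nat.pair a.encode b.encode + 1
  | .prec a b => 5 + 4 * Nat.pair a.encode b.encode + 2
  | .rfind' a => 5 + 4 * a.encode + 3

/-- Evaluation of a code on binary strings, relative to oracle `g`. -/
def strEval (g : ℕ →. ℕ) (c : OCode) (τ : List Bool) : Part (List Bool) :=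
  (c.eval g (Encodable.encode τ)).bind fun n =>
    Part.ofOption (Encodable.decode (α := List Bool) n)

/-- The machine coded by `c` (relative to `g`) is prefix-free. -/
def PrefixFreeCode (g : ℕ →. ℕ) (c : OCode) : Prop :=
  ∀ τ₁ τ₂ : List Bool, (strEval g c τ₁).Dom → (strEval g c τ₂).Dom → τ₁ <+: τ₂ → τ₁ = τ₂

/-- Prefix-free Kolmogorov complexity relative to oracle `g` (via a universal machine
that runs code `c` on input `τ` at cost `encode c + 1 + |τ|`). -/
def Krel (g : ℕ →. ℕ) (σ : List Bool) : ℕ :=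
  sInf { n : ℕ | ∃ c : OCode, PrefixFreeCode g c ∧
    ∃ τ : List Bool, σ ∈ strEval g c τ ∧ n = OCode.encode c + 1 + τ.length }

def emptyOracle : ℕ →. ℕ := fun _ => Part.some 0

/-- Prefix-free Kolmogorov complexity. -/
def K (σ : List Bool) : ℕ := Krel emptyOracle σ

/-- The first `n` bits of `x ∈ 2^ω`. -/
def seg (x : ℕ → Bool) (n : ℕ) : List Bool := List.ofFn (fun i : Fin n => x i)

/-- Effective dimension relative to oracle `g`. -/
def dimRel (g : ℕ →. ℕ) (x : ℕ → Bool) : ℝ :=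
  Filter.liminf (fun n : ℕ => (Krel g (seg x n) : ℝ) / n) Filter.atTop

/-- Effective dimension. -/
def dim (x : ℕ → Bool) : ℝ := dimRel emptyOracle x

/-- The `i`-th binary digit of a real `x ∈ [0,1]`. -/
def digit (x : ℝ) (i : ℕ) : Bool := decide (⌊x * 2 ^ (i + 1)⌋ % 2 = 1)

/-- Effective dimension of a real, via its binary digits. -/
def realDim (x : ℝ) : ℝ := dim (fun i => digit x i)

def Ddim (s : ℝ) : Set (ℕ → Bool) := {x | dim x = s}
def Dle (s : ℝ) : Set (ℕ → Bool) := {x | dim x ≤ s}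
def Dlt (s : ℝ) : Set (ℕ → Bool) := {x | dim x < s}

/-- The cylinder of a string (`∅` for `none`). -/
def cylOpt : Option (List Bool) → Set (ℕ → Bool)
  | none => ∅
  | some σ => {x | ∀ i : ℕ, (h : i < σ.length) → x i = σ.get ⟨i, h⟩}

def gaugeCost (f : ℝ → ℝ) : Option (List Bool) → ENNReal
  | none => 0
  | some σ => ENNReal.ofReal (f ((2 : ℝ) ^ (-(σ.length : ℝ))))

/-- The `f`-Hausdorff measure on Cantor space, via covers by cylinders. -/
def Hf (f : ℝ → ℝ) (A : Set (ℕ → Bool)) : ENNReal :=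
  ⨆ n : ℕ, ⨅ (C : ℕ → Option (List Bool)) (_ : A ⊆ ⋃ i, cylOpt (C i))
    (_ : ∀ i σ, C i = some σ → n ≤ σ.length), ∑' i, gaugeCost f (C i)

/-- The uniform (coin-flipping) outer measure on Cantor space. -/
def muC : Set (ℕ → Bool) → ENNReal := Hf (fun x => x)

/-- Dyadic interval `[j·2^{-n}, (j+1)·2^{-n})` (`∅` for `none`). -/
def dyOpt : Option (ℕ × ℤ) → Set ℝ
  | none => ∅
  | some p => Set.Ico ((p.2 : ℝ) * 2 ^ (-(p.1 : ℤ))) (((p.2 : ℝ) + 1) * 2 ^ (-(p.1 : ℤ)))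

def dyCost (f : ℝ → ℝ) : Option (ℕ × ℤ) → ENNReal
  | none => 0
  | some p => ENNReal.ofReal (f ((2 : ℝ) ^ (-(p.1 : ℤ))))

/-- The `f`-Hausdorff measure on `ℝ`, via covers by dyadic intervals. -/
def HfReal (f : ℝ → ℝ) (B : Set ℝ) : ENNReal :=
  ⨆ m : ℕ, ⨅ (C : ℕ → Option (ℕ × ℤ)) (_ : B ⊆ ⋃ i, dyOpt (C i))
    (_ : ∀ i p, C i = some p → m ≤ p.1), ∑' i, dyCost f (C i)

/-- The canonical map from Cantor space to `[0,1]`. -/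
def piMap (x : ℕ → Bool) : ℝ := ∑' i : ℕ, if x i then ((2 : ℝ) ^ (i + 1))⁻¹ else 0

/-- The set of `s`-well approximable numbers. -/
def W (s : ℝ) : Set ℝ :=
  {x | x ∈ Set.Icc (0 : ℝ) 1 ∧
    {pq : ℤ × ℤ | 0 < pq.2 ∧ |x - (pq.1 : ℝ) / (pq.2 : ℝ)| < (pq.2 : ℝ) ^ (-s)}.Infinite}

/-- `r_{n-1}^*`, with the convention `r_{-1}^* = 1`. -/
def prevR (rstar : ℕ → ℝ) : ℕ → ℝ
  | 0 => 1
  | n + 1 => rstar n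

/-- Level `k` is forced to `0` in the tree `T`. -/
def Forced (rstar : ℕ → ℝ) (l : ℕ → ℕ) (k : ℕ) : Prop :=
  ∃ n : ℕ, rstar n * (l (n + 1) : ℝ) + (1 - prevR rstar n) * (l n : ℝ) ≤ (k : ℝ) ∧ k < l (n + 1)

/-- The set `[T]` of infinite paths through the tree `T`. -/
def TreePaths (rstar : ℕ → ℝ) (l : ℕ → ℕ) : Set (ℕ → Bool) :=
  {x | ∀ k : ℕ, Forced rstar l k → x k = false}

open Classical in
/-- The number of splitting (non-forced) levels of `T` below `k`. -/
def freeCount (rstar : ℕ → ℝ) (l : ℕ → ℕ) (k : ℕ) : ℕ :=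
  ((Finset.range k).filter fun j => ¬ Forced rstar l j).card

open Classical in
/-- The canonical homeomorphism `δ : 2^ω → [T]`, sending the `k`-th bit of `x`
to the `k`-th splitting level of `T`. -/
def deltaMap (rstar : ℕ → ℝ) (l : ℕ → ℕ) (x : ℕ → Bool) : ℕ → Bool :=
  fun k => if Forced rstar l k then false else x (freeCount rstar l k)

/-- The tree `T` as a set of finite strings. -/
def TreeStrings (rstar : ℕ → ℝ) (l : ℕ → ℕ) : Set (List Bool) :=
  {σ | ∀ k : ℕ, (h : k < σ.length) → Forced rstar l k → σ.get ⟨k, h⟩ = false}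

open Classical in
/-- The tree `T` as an oracle. -/
def oracleOfTree (rstar : ℕ → ℝ) (l : ℕ → ℕ) : ℕ →. ℕ :=
  fun m => Part.some
    (if (Encodable.decode (α := List Bool) m).elim False (· ∈ TreeStrings rstar l) then 1 else 0)

end

namespace Stmt1Aux

/-! ### Translation from `Nat.Partrec.Code` to `OCode` -/

def c2o : Nat.Partrec.Code → OCode
  | .zero => .zero
  | .succ => .succ
  | .left => .left
  | .right => .right
  | .pair a b => .pair (c2o a) (c2o b)
  | .comp a b => .comp (c2o a) (c2o b)
  | .prec a b => .prec (c2o a) (c2o b)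
  | .rfind' a => .rfind' (c2o a)

theorem c2o_eval (g : ℕ →. ℕ) (c : Nat.Partrec.Code) :
    OCode.eval g (c2o c) = c.eval := by
  induction c <;>
    simp [c2o, OCode.eval, Nat.Partrec.Code.eval, *] <;>
    funext n <;> rfl

/-! ### The decoding machine -/

def bitval (b : Bool) : ℕ := cond b 1 0

/-- value of a little-endian bit string -/
def lval (l : List Bool) : ℕ := l.foldr (fun b acc => 2 * acc + bitval b) 0

/-- read `len` bits of `τ` starting at position `start`, as a number -/
def readNum (τ : List Bool) (start len : ℕ) : ℕ :=
  lval ((List.range len).map fun i => τ.getD (start + i) false)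

/-- first `n` binary digits (after the point) of `N / 2^n` -/
def out (N n : ℕ) : List Bool :=
  (List.range n).map fun i => decide ((N / 2 ^ (n - 1 - i)) % 2 = 1)

/-- the machine on string inputs -/
def G (τ : List Bool) : Option (List Bool) :=
  if τ.length = τ.idxOf false + 1 + τ.idxOf false +
      (Nat.unpair (readNum τ (τ.idxOf false + 1) (τ.idxOf false))).2 then
    some (out
      ((Nat.unpair (readNum τ (τ.idxOf false + 1 + τ.idxOf false)
          (Nat.unpair (readNum τ (τ.idxOf false + 1) (τ.idxOf false))).2)).1 *
        2 ^ (Nat.unpair (Nat.unpair (readNum τ (τ.idxOf false + 1) (τ.idxOf false))).1).2 /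
        (Nat.unpair (readNum τ (τ.idxOf false + 1 + τ.idxOf false)
          (Nat.unpair (readNum τ (τ.idxOf false + 1) (τ.idxOf false))).2)).2 +
        (Nat.unpair (Nat.unpair (readNum τ (τ.idxOf false + 1) (τ.idxOf false))).1).1 - 1)
      (Nat.unpair (Nat.unpair (readNum τ (τ.idxOf false + 1) (τ.idxOf false))).1).2)
  else none

/-- the machine on numeric codes -/
def F (u : ℕ) : ℕ :=
  (((Encodable.decode (α := List Bool) u).bind G).map Encodable.encode).getD 7

theorem primrec_pow : Primrec₂ (fun a b : ℕ => a ^ b) :=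
  Primrec₂.unpaired'.mp Nat.Primrec.pow

theorem primrec_lval : Primrec lval := by
  have : Primrec₂ (fun (_ : List Bool) (p : Bool × ℕ) => 2 * p.2 + bitval p.1) := by
    have h1 : Primrec (fun p : Bool × ℕ => 2 * p.2 + bitval p.1) :=
      Primrec.nat_add.comp
        (Primrec.nat_mul.comp (Primrec.const 2) Primrec.snd)
        ((Primrec.dom_bool bitval).comp Primrec.fst)
    exact h1.comp Primrec.snd |>.to₂
  exact (Primrec.list_foldr Primrec.id (Primrec.const 0) this).of_eq fun _ => rfl

theorem primrec_readNum :
    Primrec (fun x : List Bool × ℕ × ℕ => readNum x.1 x.2.1 x.2.2) := by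
  apply primrec_lval.comp
  apply Primrec.list_map (Primrec.list_range.comp (Primrec.snd.comp Primrec.snd))
  exact (Primrec.list_getD false).comp₂ (Primrec.fst.comp₂ Primrec₂.left)
    (Primrec.nat_add.comp₂ ((Primrec.fst.comp Primrec.snd).comp₂ Primrec₂.left) Primrec₂.right)

theorem primrec_out : Primrec₂ out := by
  have hinner : Primrec (fun x : (ℕ × ℕ) × ℕ => (x.1.1 / 2 ^ (x.1.2 - 1 - x.2)) % 2) := by
    apply Primrec.nat_mod.comp _ (Primrec.const 2)
    apply Primrec.nat_div.comp (Primrec.fst.comp Primrec.fst)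
    exact primrec_pow.comp (Primrec.const 2)
      (Primrec.nat_sub.comp
        (Primrec.nat_sub.comp (Primrec.snd.comp Primrec.fst) (Primrec.const 1)) Primrec.snd)
  have hdec : Primrec (fun x : (ℕ × ℕ) × ℕ => decide ((x.1.1 / 2 ^ (x.1.2 - 1 - x.2)) % 2 = 1)) :=
    (Primrec.eq.comp hinner (Primrec.const 1)).decide
  exact (Primrec.list_map (Primrec.list_range.comp Primrec.snd) hdec.to₂).to₂

theorem primrec_G : Primrec G := by
  have ha : Primrec (fun τ : List Bool => τ.idxOf false) :=
    Primrec.list_idxOf.comp (Primrec.const false) Primrec.id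
  have hv : Primrec (fun τ : List Bool => readNum τ (τ.idxOf false + 1) (τ.idxOf false)) :=
    primrec_readNum.comp (Primrec.id.pair
      ((Primrec.nat_add.comp ha (Primrec.const 1)).pair ha))
  have hL : Primrec (fun τ : List Bool =>
      (Nat.unpair (readNum τ (τ.idxOf false + 1) (τ.idxOf false))).2) :=
    Primrec.snd.comp (Primrec.unpair.comp hv)
  have hj : Primrec (fun τ : List Bool =>
      (Nat.unpair (Nat.unpair (readNum τ (τ.idxOf false + 1) (τ.idxOf false))).1).1) :=
    Primrec.fst.comp (Primrec.unpair.comp (Primrec.fst.comp (Primrec.unpair.comp hv)))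
  have hn : Primrec (fun τ : List Bool =>
      (Nat.unpair (Nat.unpair (readNum τ (τ.idxOf false + 1) (τ.idxOf false))).1).2) :=
    Primrec.snd.comp (Primrec.unpair.comp (Primrec.fst.comp (Primrec.unpair.comp hv)))
  have hm : Primrec (fun τ : List Bool =>
      readNum τ (τ.idxOf false + 1 + τ.idxOf false)
        (Nat.unpair (readNum τ (τ.idxOf false + 1) (τ.idxOf false))).2) :=
    primrec_readNum.comp (Primrec.id.pair
      ((Primrec.nat_add.comp (Primrec.nat_add.comp ha (Primrec.const 1)) ha).pair hL))
  have hval : Primrec (fun τ : List Bool =>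
      out ((Nat.unpair (readNum τ (τ.idxOf false + 1 + τ.idxOf false)
          (Nat.unpair (readNum τ (τ.idxOf false + 1) (τ.idxOf false))).2)).1 * 2 ^
          (Nat.unpair (Nat.unpair (readNum τ (τ.idxOf false + 1) (τ.idxOf false))).1).2 /
          (Nat.unpair (readNum τ (τ.idxOf false + 1 + τ.idxOf false)
          (Nat.unpair (readNum τ (τ.idxOf false + 1) (τ.idxOf false))).2)).2 +
          (Nat.unpair (Nat.unpair (readNum τ (τ.idxOf false + 1) (τ.idxOf false))).1).1 - 1)
        (Nat.unpair (Nat.unpair (readNum τ (τ.idxOf false + 1) (τ.idxOf false))).1).2) := by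
    apply primrec_out.comp _ hn
    apply Primrec.nat_sub.comp _ (Primrec.const 1)
    apply Primrec.nat_add.comp _ hj
    apply Primrec.nat_div.comp _ (Primrec.snd.comp (Primrec.unpair.comp hm))
    exact Primrec.nat_mul.comp (Primrec.fst.comp (Primrec.unpair.comp hm))
      (primrec_pow.comp (Primrec.const 2) hn)
  have hcond : PrimrecPred (fun τ : List Bool =>
      τ.length = τ.idxOf false + 1 + τ.idxOf false +
        (Nat.unpair (readNum τ (τ.idxOf false + 1) (τ.idxOf false))).2) :=
    Primrec.eq.comp Primrec.list_length
      (Primrec.nat_add.comp (Primrec.nat_add.comp (Primrec.nat_add.comp ha (Primrec.const 1)) ha) hL)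
  exact Primrec.ite hcond (Primrec.option_some.comp hval) (Primrec.const none)

theorem primrec_F : Primrec F := by
  apply Primrec.option_getD.comp _ (Primrec.const 7)
  apply Primrec.option_map
    (Primrec.option_bind Primrec.decode (primrec_G.comp Primrec.snd).to₂)
  exact (Primrec.encode.comp Primrec.snd).to₂

theorem partrec_F : Nat.Partrec (F : ℕ →. ℕ) :=
  Nat.Partrec.of_primrec (Primrec.nat_iff.mp primrec_F)

noncomputable def theCode : OCode :=
  c2o (Classical.choose (Nat.Partrec.Code.exists_code.mp partrec_F))

theorem theCode_eval (g : ℕ →. ℕ) : OCode.eval g theCode = (F : ℕ →. ℕ) := by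
  rw [theCode, c2o_eval]
  exact Classical.choose_spec (Nat.Partrec.Code.exists_code.mp partrec_F)

theorem strEval_theCode (g : ℕ →. ℕ) (τ : List Bool) :
    strEval g theCode τ = Part.ofOption (G τ) := by
  rw [strEval, theCode_eval]
  have : (F : ℕ →. ℕ) (Encodable.encode τ) = Part.some (F (Encodable.encode τ)) := rfl
  rw [this, Part.bind_some]
  rcases hG : G τ with _ | σ
  · have h7 : (Encodable.decode (α := List Bool) 7) = none := by
      have : (7 : ℕ) = Nat.succ 6 := rfl
      rw [this, Encodable.decode_list_succ]
      have h6 : Nat.unpair 6 = (2, 0) := by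
        have : Nat.pair 2 0 = 6 := rfl
        simpa using (congrArg Nat.unpair this).symm
      rw [h6]
      simp [Encodable.decode_ge_two]
      rfl
    simp [F, hG, h7]
  · simp [F, hG]

theorem mem_strEval_theCode {g : ℕ →. ℕ} {τ σ : List Bool} :
    σ ∈ strEval g theCode τ ↔ G τ = some σ := by
  rw [strEval_theCode, Part.mem_ofOption]
  exact Option.mem_def

theorem dom_strEval_theCode {g : ℕ →. ℕ} {τ : List Bool} :
    (strEval g theCode τ).Dom ↔ (G τ).isSome := by
  rw [strEval_theCode]
  cases G τ <;> simp [Part.ofOption]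

theorem G_isSome_iff (τ : List Bool) : (G τ).isSome ↔
    τ.length = τ.idxOf false + 1 + τ.idxOf false +
      (Nat.unpair (readNum τ (τ.idxOf false + 1) (τ.idxOf false))).2 := by
  unfold G
  by_cases h : τ.length = τ.idxOf false + 1 + τ.idxOf false +
      (Nat.unpair (readNum τ (τ.idxOf false + 1) (τ.idxOf false))).2 <;> simp [h]

theorem indexOf_false_append (l ext : List Bool) (h : l.idxOf false < l.length) :
    (l ++ ext).idxOf false = l.idxOf false := by
  induction l with
  | nil => simp at h
  | cons b t ih =>
    cases b
    · simp
    · have hne : true ≠ false := by simp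
      rw [List.cons_append, List.idxOf_cons_ne _ hne, List.idxOf_cons_ne _ hne]
      rw [List.idxOf_cons_ne _ hne, List.length_cons] at h
      omega

theorem indexOf_replicate_true (a : ℕ) (rest : List Bool) :
    (List.replicate a true ++ false :: rest).idxOf false = a := by
  induction a with
  | zero => simp
  | succ k ih =>
    rw [List.replicate_succ, List.cons_append, List.idxOf_cons_ne _ (by simp), ih]

theorem lval_bits (n : ℕ) : lval n.bits = n := by
  induction n using Nat.strong_induction_on with
  | _ n ih =>
    rcases Nat.eq_zero_or_pos n with rfl | hn
    · simp [lval]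
    · have hb := Nat.bit_bodd_div2 n
      have hbits : n.bits = n.bodd :: n.div2.bits := by
        rw [← hb, Nat.bits_append_bit, hb]
        intro h0
        by_contra hbod
        have : n = 0 := by
          rw [← hb, h0]
          cases hc : n.bodd
          · rfl
          · exact absurd hc (by simpa using hbod)
        omega
      have hd2 : n.div2 < n := by
        rw [Nat.div2_val]; exact Nat.div_lt_self hn (by norm_num)
      rw [hbits]
      have : lval (n.bodd :: n.div2.bits) = 2 * lval n.div2.bits + bitval n.bodd := rfl
      rw [this, ih _ hd2, ← hb]
      cases hc : n.bodd <;> simp [Nat.bit, bitval, hc] <;> omega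

theorem readNum_extract (pre mid post : List Bool) :
    readNum (pre ++ (mid ++ post)) pre.length mid.length = lval mid := by
  unfold readNum
  congr 1
  apply List.ext_get
  · simp
  · intro i h1 h2
    simp only [List.length_map, List.length_range] at h1
    have hgd : (pre ++ (mid ++ post)).getD (pre.length + i) false = mid.getD i false := by
      rw [List.getD_append_right _ _ _ _ (by omega)]
      have : pre.length + i - pre.length = i := by omega
      rw [this, List.getD_append _ _ _ _ (by omega)]
    simp only [List.get_eq_getElem, List.getElem_map, List.getElem_range]
    rw [hgd]
    exact List.getD_eq_getElem _ _ (by omega)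

/-- canonical input string for parameters j, n, a', q -/
def inp (j n a' q : ℕ) : List Bool :=
  let m := Nat.pair a' q
  let v := Nat.pair (Nat.pair j n) m.size
  List.replicate v.size true ++ false :: (v.bits ++ m.bits)

theorem inp_length (j n a' q : ℕ) :
    (inp j n a' q).length =
      2 * (Nat.pair (Nat.pair j n) (Nat.pair a' q).size).size + 1 + (Nat.pair a' q).size := by
  simp [inp, Nat.size_eq_bits_len]
  omega

theorem G_inp (j n a' q : ℕ) :
    G (inp j n a' q) = some (out (a' * 2 ^ n / q + j - 1) n) := by
  set m := Nat.pair a' q with hm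
  set v := Nat.pair (Nat.pair j n) m.size with hv
  have hidx : (inp j n a' q).idxOf false = v.size := by
    unfold inp
    exact indexOf_replicate_true _ _
  have hsplit1 : inp j n a' q =
      (List.replicate v.size true ++ [false]) ++ (v.bits ++ m.bits) := by
    simp [inp, hv, hm]
  have hr1 : readNum (inp j n a' q) (v.size + 1) v.size = v := by
    have h := readNum_extract (List.replicate v.size true ++ [false]) v.bits m.bits
    rw [← hsplit1] at h
    simpa [Nat.size_eq_bits_len, lval_bits] using h
  have hsplit2 : inp j n a' q =
      (List.replicate v.size true ++ false :: v.bits) ++ (m.bits ++ []) := by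
    simp [inp, hv, hm]
  have hr2 : readNum (inp j n a' q) (v.size + 1 + v.size) m.size = m := by
    have h := readNum_extract (List.replicate v.size true ++ false :: v.bits) m.bits []
    rw [← hsplit2] at h
    have hlen : (List.replicate v.size true ++ false :: v.bits).length = v.size + 1 + v.size := by
      simp [Nat.size_eq_bits_len]
      omega
    rw [hlen, Nat.size_eq_bits_len, lval_bits] at h
    exact h
  have h2 : (Nat.unpair v).2 = m.size := by simp [hv]
  have hj : (Nat.unpair (Nat.unpair v).1).1 = j := by simp [hv]
  have hn' : (Nat.unpair (Nat.unpair v).1).2 = n := by simp [hv]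
  have hq : (Nat.unpair m).2 = q := by simp [hm]
  have ha : (Nat.unpair m).1 = a' := by simp [hm]
  have hlen : (inp j n a' q).length = v.size + 1 + v.size + (Nat.unpair v).2 := by
    rw [h2]
    simp only [hv, hm, inp, List.length_append, List.length_cons, List.length_replicate,
      Nat.size_eq_bits_len]
    omega
  unfold G
  rw [hidx, hr1, if_pos hlen, h2, hr2, hj, hn', hq, ha]

theorem prefixFree_theCode (g : ℕ →. ℕ) : PrefixFreeCode g theCode := by
  intro τ₁ τ₂ h1 h2 hpre
  rw [dom_strEval_theCode, G_isSome_iff] at h1 h2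
  obtain ⟨ext, hext⟩ := id hpre
  set a₁ := τ₁.idxOf false with ha1
  have halt : a₁ < τ₁.length := by
    have hle := List.idxOf_le_length (a := false) (l := τ₁)
    rcases lt_or_eq_of_le hle with h | h
    · exact h
    · omega
  have hidx2 : τ₂.idxOf false = a₁ := by
    rw [← hext]
    exact indexOf_false_append _ _ halt
  have hr : readNum τ₂ (a₁ + 1) a₁ = readNum τ₁ (a₁ + 1) a₁ := by
    unfold readNum
    congr 1
    apply List.map_congr_left
    intro i hi
    simp only [List.mem_range] at hi
    rw [← hext]
    exact List.getD_append _ _ _ _ (by omega)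
  rw [hidx2, hr] at h2
  exact hpre.eq_of_length (by omega)

theorem K_le_inp (j n a' q : ℕ) :
    K (out (a' * 2 ^ n / q + j - 1) n) ≤
      OCode.encode theCode + 1 +
        (2 * (Nat.pair (Nat.pair j n) (Nat.pair a' q).size).size + 1 + (Nat.pair a' q).size) := by
  apply Nat.sInf_le
  refine ⟨theCode, prefixFree_theCode _, inp j n a' q, ?_, by rw [inp_length]⟩
  rw [mem_strEval_theCode]
  exact G_inp j n a' q

theorem out_eq_seg (x : ℝ) (hx : 0 ≤ x) (n : ℕ) :
    out (⌊x * 2 ^ n⌋₊ + 2 ^ n) n = seg (fun i => digit x i) n := by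
  apply List.ext_get
  · simp [out, seg]
  · intro i h1 h2
    simp only [out, seg, List.get_eq_getElem, List.getElem_map, List.getElem_range,
      List.getElem_ofFn]
    have hin : i < n := by simpa [out] using h1
    -- arithmetic: (⌊x*2^n⌋₊ + 2^n) / 2^(n-1-i) = ⌊x*2^n⌋₊ / 2^(n-1-i) + 2^(i+1)
    have hsplit : (2 : ℕ) ^ n = 2 ^ (i + 1) * 2 ^ (n - 1 - i) := by
      rw [← pow_add]
      congr 1
      omega
    have hdiv : (⌊x * 2 ^ n⌋₊ + 2 ^ n) / 2 ^ (n - 1 - i) =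
        ⌊x * 2 ^ n⌋₊ / 2 ^ (n - 1 - i) + 2 ^ (i + 1) := by
      rw [hsplit, mul_comm (2 ^ (i + 1))]
      exact Nat.add_mul_div_left _ _ (Nat.pow_pos (by norm_num))
    have hfloor : ⌊x * 2 ^ n⌋₊ / 2 ^ (n - 1 - i) = ⌊x * 2 ^ (i + 1)⌋₊ := by
      have : x * 2 ^ (i + 1) = (x * 2 ^ n) / ((2 ^ (n - 1 - i) : ℕ) : ℝ) := by
        push_cast
        rw [eq_div_iff (by positivity), mul_assoc, ← pow_add]
        congr 2
        omega
      rw [this, Nat.floor_div_natCast]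
    have hmod : (⌊x * 2 ^ n⌋₊ / 2 ^ (n - 1 - i) + 2 ^ (i + 1)) % 2 =
        ⌊x * 2 ^ (i + 1)⌋₊ % 2 := by
      rw [hfloor]
      have : (2:ℕ) ^ (i+1) = 2 * 2 ^ i := by ring
      omega
    rw [hdiv, hmod]
    unfold digit
    apply decide_eq_decide.mpr
    have hcast : ⌊x * 2 ^ (i + 1)⌋ = (⌊x * 2 ^ (i + 1)⌋₊ : ℤ) :=
      (Int.natCast_floor_eq_floor (by positivity)).symm
    rw [hcast]
    omega

theorem floor_adjacent {a b : ℝ} (hb : 0 ≤ b) (h : |a - b| < 1) :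
    ⌊a⌋₊ ≤ ⌊b⌋₊ + 1 ∧ ⌊b⌋₊ ≤ ⌊a⌋₊ + 1 := by
  rw [abs_lt] at h
  constructor
  · have : a ≤ b + 1 := by linarith [h.2]
    calc ⌊a⌋₊ ≤ ⌊b + 1⌋₊ := Nat.floor_le_floor (by linarith)
    _ = ⌊b⌋₊ + 1 := by rw [Nat.floor_add_one hb]
  · have hb1 : b ≤ a + 1 := by linarith [h.1]
    rcases le_or_gt a 0 with ha | ha
    · have : b ≤ 1 := by linarith
      have : ⌊b⌋₊ ≤ 1 := by
        calc ⌊b⌋₊ ≤ ⌊(1:ℝ)⌋₊ := Nat.floor_le_floor this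
        _ = 1 := by norm_num
      omega
    · calc ⌊b⌋₊ ≤ ⌊a + 1⌋₊ := Nat.floor_le_floor hb1
      _ = ⌊a⌋₊ + 1 := by rw [Nat.floor_add_one ha.le]

theorem pair_lt_sq (a b : ℕ) : Nat.pair a b < (max a b + 1) ^ 2 := by
  rcases lt_or_ge a b with h | h
  · rw [Nat.pair, if_pos h, max_eq_right h.le]
    nlinarith
  · rw [Nat.pair, if_neg (not_lt.mpr h), max_eq_left h]
    nlinarith

theorem size_pair_le (a b : ℕ) : (Nat.pair a b).size ≤ 2 * (max a b).size := by
  rw [Nat.size_le, pow_mul]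
  calc Nat.pair a b < (max a b + 1) ^ 2 := pair_lt_sq a b
  _ ≤ (2 ^ (max a b).size) ^ 2 := by
      apply Nat.pow_le_pow_left
      exact Nat.lt_size_self _
  _ = (2 ^ 2) ^ (max a b).size := by rw [← pow_mul, ← pow_mul, mul_comm]

theorem size_max_le (a b : ℕ) : (max a b).size ≤ a.size + b.size := by
  rcases max_cases a b with ⟨h, _⟩ | ⟨h, _⟩ <;> rw [h] <;> omega

theorem sq_le_four_pow (w : ℕ) : w ^ 2 ≤ 4 ^ w := by
  induction w with
  | zero => norm_num
  | succ t ih =>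
    have h2 : t < 2 ^ t := Nat.lt_two_pow_self
    have h24 : (2:ℕ) ^ t ≤ 4 ^ t := Nat.pow_le_pow_left (by norm_num) t
    have h4 : (4:ℕ) ^ (t + 1) = 4 * 4 ^ t := by ring
    nlinarith [ih]

theorem size_le_sqrt (t : ℕ) : t.size ≤ 2 * t.sqrt + 2 := by
  rw [Nat.size_le]
  calc t < (t.sqrt + 1) * (t.sqrt + 1) := Nat.lt_succ_sqrt t
  _ = (t.sqrt + 1) ^ 2 := (sq _).symm
  _ ≤ 4 ^ (t.sqrt + 1) := sq_le_four_pow _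
  _ = 2 ^ (2 * t.sqrt + 2) := by
      rw [show (4:ℕ) = 2 ^ 2 by norm_num, ← pow_mul]
      ring_nf

theorem size_add_small (t c : ℕ) (hc : c + 2 ≤ 2 ^ c) : (t + c).size ≤ t.size + c := by
  rw [Nat.size_le]
  have h1 : t < 2 ^ t.size := Nat.lt_size_self t
  have h2 : (2:ℕ) ^ (t.size + c) = 2 ^ t.size * 2 ^ c := by rw [pow_add]
  have h3 : 1 ≤ 2 ^ t.size := Nat.one_le_two_pow
  nlinarith

theorem K_seg_bound (x : ℝ) (hx0 : 0 ≤ x) (hx1 : x ≤ 1) (s : ℝ) (hs : 2 ≤ s)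
    (p q : ℤ) (hq : 0 < q) (happ : |x - (p:ℝ)/(q:ℝ)| < (q:ℝ) ^ (-s)) :
    K (seg (fun i => digit x i) ⌊s * (Nat.log 2 q.toNat : ℝ)⌋₊) ≤
      (OCode.encode theCode + 48) + 2 * Nat.log 2 q.toNat
        + 12 * Nat.size ⌊s * (Nat.log 2 q.toNat : ℝ)⌋₊ := by
  set qn := q.toNat with hqn_def
  set k := Nat.log 2 qn with hk_def
  set n := ⌊s * (k : ℝ)⌋₊ with hn_def
  have hqn_pos : 0 < qn := by omega
  have hqnR : ((qn : ℕ) : ℝ) = (q : ℝ) := by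
    rw [hqn_def]; exact_mod_cast congrArg Int.cast (Int.toNat_of_nonneg hq.le)
  have hq1 : (1:ℝ) ≤ (q:ℝ) := by exact_mod_cast hq
  have hqR_pos : (0:ℝ) < (q:ℝ) := by linarith
  have hs0 : (0:ℝ) ≤ s := by linarith
  -- 2^n ≤ q^s
  have h2k_le : ((2:ℝ)) ^ k ≤ (q:ℝ) := by
    rw [← hqnR]
    exact_mod_cast Nat.pow_log_le_self 2 (by omega)
  have h2n_le : ((2:ℝ) ^ (n:ℕ)) ≤ (q:ℝ) ^ s := by
    have hn_le : ((n:ℕ):ℝ) ≤ s * k := Nat.floor_le (by positivity)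
    calc (2:ℝ) ^ (n:ℕ) = (2:ℝ) ^ ((n:ℕ):ℝ) := (Real.rpow_natCast 2 n).symm
    _ ≤ (2:ℝ) ^ (s * (k:ℝ)) := Real.rpow_le_rpow_of_exponent_le one_le_two hn_le
    _ = ((2:ℝ) ^ ((k:ℕ):ℝ)) ^ s := by
        rw [← Real.rpow_mul (by norm_num), mul_comm]
    _ = ((2:ℝ) ^ k) ^ s := by rw [Real.rpow_natCast]
    _ ≤ (q:ℝ) ^ s := Real.rpow_le_rpow (by positivity) h2k_le hs0
  have hqs_le1 : ((q:ℝ)) ^ (-s) ≤ 1 := Real.rpow_le_one_of_one_le_of_nonpos hq1 (by linarith)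
  have happ1 : |x - (p:ℝ)/(q:ℝ)| < 1 := lt_of_lt_of_le happ hqs_le1
  have h2n_pos : (0:ℝ) < (2:ℝ) ^ (n:ℕ) := by positivity
  have happ2 : |x - (p:ℝ)/(q:ℝ)| * 2 ^ (n:ℕ) < 1 := by
    have hneg : ((q:ℝ)) ^ (-s) = ((q:ℝ) ^ s)⁻¹ := Real.rpow_neg hqR_pos.le s
    have hinv : ((q:ℝ) ^ s)⁻¹ ≤ ((2:ℝ) ^ (n:ℕ))⁻¹ := inv_anti₀ h2n_pos h2n_le
    have hlt : |x - (p:ℝ)/(q:ℝ)| < ((2:ℝ) ^ (n:ℕ))⁻¹ := by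
      rw [hneg] at happ
      exact happ.trans_le hinv
    have := mul_lt_mul_of_pos_right hlt h2n_pos
    rwa [inv_mul_cancel₀ h2n_pos.ne'] at this
  -- bounds on p
  have hpq_lt : (p:ℝ)/(q:ℝ) < 2 := by
    have := abs_lt.mp happ1
    linarith [this.1]
  have hpq_gt : -1 < (p:ℝ)/(q:ℝ) := by
    have := abs_lt.mp happ1
    linarith [this.2]
  have hp_lt : p < 2 * q := by
    have : (p:ℝ) < 2 * q := by
      rw [div_lt_iff₀ hqR_pos] at hpq_lt
      linarith
    exact_mod_cast this
  have hp_gt : -q < p := by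
    have : (-1:ℝ) * q < p := by
      rw [neg_lt, ← neg_div] at hpq_gt
      have := (div_lt_iff₀ hqR_pos).mp hpq_gt
      linarith
    have : (-q : ℝ) < p := by push_cast; linarith
    exact_mod_cast this
  set a' := (p + q).toNat with ha'_def
  have ha'R : ((a' : ℕ) : ℝ) = (p:ℝ) + (q:ℝ) := by
    rw [ha'_def]
    exact_mod_cast congrArg Int.cast (Int.toNat_of_nonneg (by omega))
  have ha'3 : a' ≤ 3 * qn := by omega
  -- floors
  have hA : ⌊(x + 1) * 2 ^ (n:ℕ)⌋₊ = ⌊x * 2 ^ (n:ℕ)⌋₊ + 2 ^ n := by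
    rw [add_mul, one_mul]
    rw [show ((2:ℝ) ^ (n:ℕ)) = (((2 ^ n : ℕ) : ℝ)) by push_cast; ring]
    rw [Nat.floor_add_natCast (by positivity)]
  have hB : ⌊((a' : ℝ) / (qn : ℝ)) * 2 ^ (n:ℕ)⌋₊ = a' * 2 ^ n / qn := by
    rw [show ((a' : ℝ) / (qn : ℝ)) * 2 ^ (n:ℕ) = ((a' * 2 ^ n : ℕ) : ℝ) / ((qn : ℕ) : ℝ) by
      push_cast; ring]
    rw [Nat.floor_div_natCast, Nat.floor_natCast]
  have hdiff : |((x + 1) * 2 ^ (n:ℕ)) - ((a' : ℝ) / (qn : ℝ)) * 2 ^ (n:ℕ)| < 1 := by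
    have hstep : ((a' : ℝ) / (qn : ℝ)) = (p:ℝ)/(q:ℝ) + 1 := by
      rw [ha'R, hqnR, add_div, div_self hqR_pos.ne']
    rw [hstep]
    have : ((x + 1) * 2 ^ (n:ℕ)) - ((p:ℝ)/(q:ℝ) + 1) * 2 ^ (n:ℕ) =
        (x - (p:ℝ)/(q:ℝ)) * 2 ^ (n:ℕ) := by ring
    rw [this, abs_mul, abs_of_pos h2n_pos]
    exact happ2
  have hadj := floor_adjacent (a := (x + 1) * 2 ^ (n:ℕ))
    (b := ((a' : ℝ) / (qn : ℝ)) * 2 ^ (n:ℕ)) (by positivity) hdiff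
  rw [hA, hB] at hadj
  set A := ⌊x * 2 ^ (n:ℕ)⌋₊ + 2 ^ n with hA_def
  set B := a' * 2 ^ n / qn with hB_def
  set j := A + 1 - B with hj_def
  have hj2 : j ≤ 2 := by omega
  have hBj : B + j - 1 = A := by omega
  -- apply the machine bound
  have hseg : seg (fun i => digit x i) n = out (a' * 2 ^ n / qn + j - 1) n := by
    rw [show a' * 2 ^ n / qn + j - 1 = A by omega, hA_def]
    exact (out_eq_seg x hx0 n).symm
  rw [hseg]
  calc K (out (a' * 2 ^ n / qn + j - 1) n) ≤
      OCode.encode theCode + 1 +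
        (2 * (Nat.pair (Nat.pair j n) (Nat.pair a' qn).size).size + 1 + (Nat.pair a' qn).size) :=
      K_le_inp j n a' qn
  _ ≤ (OCode.encode theCode + 48) + 2 * k + 12 * Nat.size n := by
      -- size estimates
      have hqn_size : qn.size ≤ k + 1 := by
        rw [Nat.size_le]
        exact Nat.lt_pow_succ_log_self (by norm_num) qn
      have hqn_lt : qn < 2 ^ (k + 1) := Nat.lt_pow_succ_log_self (by norm_num) qn
      have ha'_lt : a' < 2 ^ (k + 3) := by
        have : (2:ℕ) ^ (k + 3) = 8 * 2 ^ k := by ring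
        have h8 : 3 * qn < 3 * 2 ^ (k+1) := by omega
        have : 3 * 2 ^ (k+1) ≤ 2 ^ (k+3) := by
          have : (2:ℕ) ^ (k+3) = 4 * 2 ^ (k+1) := by ring
          omega
        omega
      have hm_size : (Nat.pair a' qn).size ≤ 2 * (k + 3) := by
        calc (Nat.pair a' qn).size ≤ 2 * (max a' qn).size := size_pair_le a' qn
        _ ≤ 2 * (k + 3) := by
            have : (max a' qn).size ≤ k + 3 := by
              rw [Nat.size_le]
              have : qn < 2 ^ (k + 3) := by
                have : (2:ℕ) ^ (k+3) = 4 * 2 ^ (k+1) := by ring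
                omega
              omega
            omega
      have hn2k : 2 * k ≤ n := by
        rw [hn_def]
        apply Nat.le_floor
        push_cast
        nlinarith
      have hjn_size : (Nat.pair j n).size ≤ 2 * (n.size + 2) := by
        calc (Nat.pair j n).size ≤ 2 * (max j n).size := size_pair_le j n
        _ ≤ 2 * (n.size + 2) := by
            have h1 : max j n ≤ n + 2 := by omega
            have h2 : (max j n).size ≤ (n + 2).size := Nat.size_le_size h1
            have h3 : (n + 2).size ≤ n.size + 2 := size_add_small n 2 (by norm_num)
            omega
      have hsm_size : (Nat.pair a' qn).size.size ≤ n.size + 6 := by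
        have h1 : (Nat.pair a' qn).size ≤ n + 6 := by omega
        have h2 : (Nat.pair a' qn).size.size ≤ (n + 6).size := Nat.size_le_size h1
        have h3 : (n + 6).size ≤ n.size + 6 := size_add_small n 6 (by norm_num)
        omega
      have hv_size : (Nat.pair (Nat.pair j n) (Nat.pair a' qn).size).size ≤
          2 * (2 * (n.size + 2) + (n.size + 6)) := by
        calc (Nat.pair (Nat.pair j n) (Nat.pair a' qn).size).size ≤
            2 * (max (Nat.pair j n) (Nat.pair a' qn).size).size := size_pair_le _ _
        _ ≤ 2 * ((Nat.pair j n).size + (Nat.pair a' qn).size.size) := by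
            have := size_max_le (Nat.pair j n) (Nat.pair a' qn).size
            omega
        _ ≤ 2 * (2 * (n.size + 2) + (n.size + 6)) := by omega
      omega

theorem exists_large_q (x : ℝ) {s : ℝ} (hs : 2 ≤ s) (hx0 : 0 ≤ x) (hx1 : x ≤ 1)
    (hinf : {pq : ℤ × ℤ |
      0 < pq.2 ∧ |x - (pq.1 : ℝ) / (pq.2 : ℝ)| < (pq.2 : ℝ) ^ (-s)}.Infinite)
    (Q : ℤ) :
    ∃ pq : ℤ × ℤ, (0 < pq.2 ∧ |x - (pq.1 : ℝ) / (pq.2 : ℝ)| < (pq.2 : ℝ) ^ (-s)) ∧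
      Q < pq.2 := by
  by_contra hcon
  push_neg at hcon
  apply hinf
  apply Set.Finite.subset (Set.finite_Icc ((-Q, 1) : ℤ × ℤ) ((2 * Q, Q) : ℤ × ℤ))
  rintro ⟨p, q⟩ ⟨hq, happ⟩
  have hqQ : q ≤ Q := hcon (p, q) ⟨hq, happ⟩
  have hq1 : (1:ℝ) ≤ (q:ℝ) := by exact_mod_cast hq
  have hqR_pos : (0:ℝ) < (q:ℝ) := by linarith
  have hqs_le1 : ((q:ℝ)) ^ (-s) ≤ 1 :=
    Real.rpow_le_one_of_one_le_of_nonpos hq1 (by linarith)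
  have happ1 : |x - (p:ℝ)/(q:ℝ)| < 1 := lt_of_lt_of_le happ hqs_le1
  have hab := abs_lt.mp happ1
  have hp_lt : p < 2 * q := by
    have h1 : (p:ℝ)/(q:ℝ) < 2 := by linarith [hab.1]
    have : (p:ℝ) < 2 * q := by
      rw [div_lt_iff₀ hqR_pos] at h1
      linarith
    exact_mod_cast this
  have hp_gt : -q < p := by
    have h1 : -1 < (p:ℝ)/(q:ℝ) := by linarith [hab.2]
    have : (-q:ℝ) < p := by
      rw [neg_lt, ← neg_div, div_lt_iff₀ hqR_pos] at h1
      push_cast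
      linarith
    exact_mod_cast this
  constructor <;> constructor <;> simp <;> omega

theorem stmt1_aux (s : ℝ) (hs : 2 ≤ s) :
    W s ⊆ {x ∈ Set.Icc (0 : ℝ) 1 | realDim x ≤ 2 / s} := by
  intro x hx
  obtain ⟨hxIcc, hinf⟩ := hx
  refine ⟨hxIcc, ?_⟩
  obtain ⟨hx0, hx1⟩ := hxIcc
  have hs0 : (0:ℝ) < s := by linarith
  rw [realDim, dim, dimRel]
  apply le_of_forall_pos_le_add
  intro ε hε
  apply Filter.liminf_le_of_frequently_le _
    (Filter.isBoundedUnder_of ⟨0, fun n => by positivity⟩)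
  rw [Filter.frequently_atTop]
  intro B
  -- choose the threshold
  set C₁ : ℕ := OCode.encode theCode + 48 + 1 with hC₁
  obtain ⟨N₀, hN₀B, hN₀1, hN₀C, hN₀sq⟩ :
      ∃ N₀ : ℕ, B ≤ N₀ ∧ 1 ≤ N₀ ∧ 2 * (C₁:ℝ) / ε ≤ N₀ ∧ (96 / ε) ^ 2 ≤ (N₀:ℝ) := by
    refine ⟨max (max B 1) ⌈max (2 * (C₁:ℝ) / ε) ((96 / ε) ^ 2)⌉₊, ?_, ?_, ?_, ?_⟩
    · omega
    · omega
    · calc 2 * (C₁:ℝ) / ε ≤ max (2 * (C₁:ℝ) / ε) ((96 / ε) ^ 2) := le_max_left _ _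
      _ ≤ (⌈max (2 * (C₁:ℝ) / ε) ((96 / ε) ^ 2)⌉₊ : ℝ) := Nat.le_ceil _
      _ ≤ _ := by exact_mod_cast Nat.cast_le.mpr (le_max_right _ _)
    · calc (96 / ε) ^ 2 ≤ max (2 * (C₁:ℝ) / ε) ((96 / ε) ^ 2) := le_max_right _ _
      _ ≤ (⌈max (2 * (C₁:ℝ) / ε) ((96 / ε) ^ 2)⌉₊ : ℝ) := Nat.le_ceil _
      _ ≤ _ := by exact_mod_cast Nat.cast_le.mpr (le_max_right _ _)
  -- choose a good approximation pair
  obtain ⟨⟨p, q⟩, ⟨hq, happ⟩, hqQ⟩ :=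
    exists_large_q x hs hx0 hx1 hinf ((2 : ℤ) ^ (N₀ + 1))
  set qn := q.toNat with hqn_def
  set k := Nat.log 2 qn with hk_def
  set n := ⌊s * (k : ℝ)⌋₊ with hn_def
  have hqn_large : 2 ^ (N₀ + 1) ≤ qn := by
    have h1 : ((2 ^ (N₀ + 1) : ℕ) : ℤ) < q := by push_cast; exact hqQ
    omega
  have hk_ge : N₀ + 1 ≤ k := (Nat.le_log_iff_pow_le (b := 2) (y := qn) (by norm_num) (by omega)).mpr hqn_large
  have hn2k : 2 * k ≤ n := by
    rw [hn_def]
    apply Nat.le_floor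
    push_cast
    nlinarith
  have hnN₀ : N₀ ≤ n := by omega
  have hn1 : 1 ≤ n := by omega
  have hnR_pos : (0:ℝ) < (n:ℝ) := by exact_mod_cast hn1
  refine ⟨n, by omega, ?_⟩
  -- the complexity bound
  have hK := K_seg_bound x hx0 hx1 s hs p q hq happ
  rw [← hqn_def, ← hk_def, ← hn_def] at hK
  have hKR : ((Krel emptyOracle (seg (fun i => digit x i) n) : ℕ) : ℝ) ≤
      (OCode.encode theCode + 48 : ℕ) + 2 * k + 12 * (Nat.size n : ℝ) := by
    have : ((K (seg (fun i => digit x i) n) : ℕ) : ℝ) ≤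
        (((OCode.encode theCode + 48) + 2 * k + 12 * Nat.size n : ℕ) : ℝ) := by
      exact_mod_cast hK
    rw [K] at this
    push_cast at this
    push_cast
    linarith
  -- k ≤ (n+1)/s
  have hk_le : (k : ℝ) * s ≤ (n:ℝ) + 1 := by
    have h2 := Nat.lt_floor_add_one (s * (k:ℝ))
    rw [← hn_def] at h2
    nlinarith
  clear_value qn k n
  -- size n ≤ 2 sqrt n + 2, and sqrt bound
  have hsqrtn_mul : Real.sqrt n * Real.sqrt n = (n:ℝ) := Real.mul_self_sqrt (by positivity)
  have hsqrt_nat : (Nat.sqrt n : ℝ) ≤ Real.sqrt n := by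
    have hnn : ((Nat.sqrt n : ℕ) : ℝ) ^ 2 ≤ (n:ℝ) := by
      exact_mod_cast Nat.sqrt_le' n
    nlinarith [Real.sqrt_nonneg (n:ℝ), (by positivity : (0:ℝ) ≤ ((Nat.sqrt n : ℕ) : ℝ))]
  have hsize : (Nat.size n : ℝ) ≤ 2 * Real.sqrt n + 2 := by
    have h1 : (Nat.size n : ℝ) ≤ 2 * (Nat.sqrt n : ℝ) + 2 := by
      exact_mod_cast size_le_sqrt n
    linarith
  have hsqrt1 : (1:ℝ) ≤ Real.sqrt n := by
    rw [show (1:ℝ) = Real.sqrt 1 by simp]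
    exact Real.sqrt_le_sqrt (by exact_mod_cast hn1)
  have hsqrt_ge : 96 / ε ≤ Real.sqrt n := by
    have h1 : ((96 / ε) ^ 2 : ℝ) ≤ (n:ℝ) := by
      calc ((96 / ε) ^ 2 : ℝ) ≤ (N₀:ℝ) := hN₀sq
      _ ≤ (n:ℝ) := by exact_mod_cast hnN₀
    exact (Real.le_sqrt' (by positivity)).mpr h1
  have hC₁n : (C₁ : ℝ) ≤ ε / 2 * n := by
    have h1 : (N₀ : ℝ) ≤ n := by exact_mod_cast hnN₀
    have h2 : 2 * (C₁:ℝ) / ε ≤ (n:ℝ) := by linarith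
    rw [div_le_iff₀ hε] at h2
    linarith
  have h96 : 48 * Real.sqrt n ≤ ε / 2 * n := by
    have h1 : (96:ℝ) ≤ ε * Real.sqrt n := by
      have := mul_le_mul_of_nonneg_left hsqrt_ge hε.le
      rw [mul_div_cancel₀ _ hε.ne'] at this
      linarith
    have h2 := mul_le_mul_of_nonneg_right h1 (Real.sqrt_nonneg (n:ℝ))
    rw [mul_assoc, hsqrtn_mul] at h2
    linarith
  have h2s : 2 / s ≤ 1 := by
    rw [div_le_one hs0]
    linarith
  -- final assembly
  rw [div_le_iff₀ hnR_pos]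
  have hC₀cast : ((OCode.encode theCode + 48 : ℕ) : ℝ) = (C₁ : ℝ) - 1 := by
    rw [hC₁]
    push_cast
    ring
  rw [hC₀cast] at hKR
  have e1 : 2 * (k:ℝ) ≤ 2 / s * n + 1 := by
    have h2 : 2 * (k:ℝ) ≤ 2 * ((n:ℝ) + 1) / s := by
      rw [le_div_iff₀ hs0]
      linarith [hk_le]
    have h3 : 2 * ((n:ℝ) + 1) / s = 2 / s * n + 2 / s := by
      field_simp
    linarith
  have e3 : 12 * (Nat.size n : ℝ) ≤ 48 * Real.sqrt n := by linarith
  have egoal : (2 / s + ε) * (n:ℝ) = 2 / s * n + ε / 2 * n + ε / 2 * n := by ring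
  rw [egoal]
  linarith [hKR]


end Stmt1Aux

/-- for `s ≥ 2`, every `s`-well approximable number has effective
dimension at most `2/s`. -/
theorem stmt1 (s : ℝ) (hs : 2 ≤ s) :
    W s ⊆ {x ∈ Set.Icc (0 : ℝ) 1 | realDim x ≤ 2 / s} := by
  exact Stmt1Aux.stmt1_aux s hs
end

section
/- For every 0 < s < 1 there exists a gauge function f such that: (1) lim_{x→0+} x^{-1}f(x) = ∞; (2) x^{-1}f(x) is monotonically decreasing; (3) ∑_{q=1}^∞ q·f(q^{-2/s}) < ∞; and (4) for every r ∈ (s,1] it is not the case that f(x) ≤ x^r for all sufficiently small x. -/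
open Filter Set

open Real

noncomputable def cc (s : ℝ) : ℝ := (1 - s) / 2
noncomputable def Dd (s x : ℝ) : ℝ := 1 + cc s * Real.log (1 + x⁻¹)
noncomputable def ff (s x : ℝ) : ℝ := x ^ s / (Dd s x) ^ 2

section Stmt4Aux

variable {s : ℝ}

lemma cc_pos (hs1 : s < 1) : 0 < cc s := by unfold cc; linarith

lemma Dd_ge_one (hs1 : s < 1) {x : ℝ} (hx : 0 < x) : 1 ≤ Dd s x := by
  have h1 : (1:ℝ) < 1 + x⁻¹ := by have := inv_pos.2 hx; linarith
  have := Real.log_pos h1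
  have := cc_pos (s := s) hs1
  unfold Dd; nlinarith

lemma ff_pos (hs1 : s < 1) {x : ℝ} (hx : 0 < x) : 0 < ff s x := by
  have hD := Dd_ge_one hs1 hx
  have : 0 < x ^ s := Real.rpow_pos_of_pos hx s
  unfold ff; positivity

lemma hasDerivAt_Dd {x : ℝ} (hx : 0 < x) :
    HasDerivAt (Dd s) (-(cc s / (x * (x + 1)))) x := by
  have hx1 : (0:ℝ) < 1 + x⁻¹ := by positivity
  have h1 : HasDerivAt (fun y : ℝ => 1 + y⁻¹) (-(x ^ 2)⁻¹) x :=
    (hasDerivAt_inv hx.ne').const_add 1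
  have h2 := h1.log hx1.ne'
  have h3 := (h2.const_mul (cc s)).const_add 1
  refine h3.congr_deriv ?_
  have hx0 : x ≠ 0 := hx.ne'
  have hx2 : x + 1 ≠ 0 := by positivity
  field_simp

lemma hasDerivAt_ff (hs1 : s < 1) {x : ℝ} (hx : 0 < x) :
    HasDerivAt (ff s)
      ((s * x ^ (s - 1) * Dd s x + 2 * cc s * x ^ s / (x * (x + 1))) / (Dd s x) ^ 3) x := by
  have hD : 1 ≤ Dd s x := Dd_ge_one hs1 hx
  have hD0 : Dd s x ≠ 0 := by linarith
  have hu : HasDerivAt (fun y : ℝ => y ^ s) (s * x ^ (s - 1)) x :=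
    Real.hasDerivAt_rpow_const (Or.inl hx.ne')
  have hv : HasDerivAt (fun y => (Dd s y) ^ 2)
      ((2 : ℕ) * Dd s x ^ 1 * (-(cc s / (x * (x + 1))))) x := (hasDerivAt_Dd hx).pow 2
  have h := hu.div hv (by positivity)
  refine h.congr_deriv ?_
  have hx0 : x ≠ 0 := hx.ne'
  have hx2 : x + 1 ≠ 0 := by positivity
  field_simp
  ring

lemma ff_contOn (hs1 : s < 1) : ContinuousOn (ff s) (Set.Ioi 0) := fun x hx =>
  (hasDerivAt_ff hs1 (Set.mem_Ioi.1 hx)).continuousAt.continuousWithinAt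

lemma ff_mono (hs0 : 0 < s) (hs1 : s < 1) : MonotoneOn (ff s) (Set.Ioi 0) := by
  apply monotoneOn_of_deriv_nonneg (convex_Ioi 0) (ff_contOn hs1)
  · rw [interior_Ioi]
    exact fun x hx => (hasDerivAt_ff hs1 (Set.mem_Ioi.1 hx)).differentiableAt.differentiableWithinAt
  · rw [interior_Ioi]
    intro x hx
    rw [(hasDerivAt_ff hs1 (Set.mem_Ioi.1 hx)).deriv]
    have hx0 : (0:ℝ) < x := hx
    have hD : 1 ≤ Dd s x := Dd_ge_one hs1 hx0
    have h1 : 0 ≤ x ^ (s - 1) := Real.rpow_nonneg hx0.le _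
    have h2 : 0 ≤ x ^ s := Real.rpow_nonneg hx0.le _
    have hc := cc_pos (s := s) hs1
    have hD0 : (0:ℝ) < Dd s x := by linarith
    apply div_nonneg _ (by positivity)
    have : 0 ≤ s * x ^ (s - 1) * Dd s x := by positivity
    have : 0 ≤ 2 * cc s * x ^ s / (x * (x + 1)) := by positivity
    linarith

lemma ff_ratio (hs0 : 0 < s) (hs1 : s < 1) : RatioDecreasing (ff s) := by
  apply antitoneOn_of_deriv_nonpos (convex_Ioi 0)
  · exact (ff_contOn hs1).div continuousOn_id (fun x hx => ne_of_gt hx)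
  · rw [interior_Ioi]
    intro x hx
    have hd := (hasDerivAt_ff hs1 (Set.mem_Ioi.1 hx)).div (hasDerivAt_id x) (ne_of_gt hx)
    simp only [id_eq] at hd
    exact hd.differentiableAt.differentiableWithinAt
  · rw [interior_Ioi]
    intro x hx
    have hx0 : (0:ℝ) < x := hx
    have hd := (hasDerivAt_ff hs1 hx0).div (hasDerivAt_id x) hx0.ne'
    simp only [id_eq] at hd
    rw [show (fun x => ff s x / x) = ff s / id from rfl, hd.deriv]
    apply div_nonpos_of_nonpos_of_nonneg _ (by positivity)
    have hD : 1 ≤ Dd s x := Dd_ge_one hs1 hx0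
    have hD0 : (0:ℝ) < Dd s x := by linarith
    have h2 : 0 < x ^ s := Real.rpow_pos_of_pos hx0 _
    have hxs : x ^ (s - 1) * x = x ^ s := by
      rw [← Real.rpow_add_one hx0.ne' (s - 1)]; ring_nf
    have hc : cc s = (1 - s) / 2 := rfl
    have key : (s * x ^ (s - 1) * Dd s x + 2 * cc s * x ^ s / (x * (x + 1))) / (Dd s x) ^ 3 * x
        ≤ ff s x := by
      have hfe : ff s x = x ^ s / (Dd s x) ^ 2 := rfl
      rw [hfe, div_mul_eq_mul_div, div_le_div_iff₀ (by positivity) (by positivity)]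
      have e1 : (s * x ^ (s - 1) * Dd s x + 2 * cc s * x ^ s / (x * (x + 1))) * x
          = s * x ^ s * Dd s x + 2 * cc s * x ^ s / (x + 1) := by
        field_simp
        linear_combination (s * Dd s x * (x + 1)) * hxs
      rw [e1]
      have hcp := cc_pos (s := s) hs1
      have h3 : 2 * cc s * x ^ s / (x + 1) ≤ 2 * cc s * x ^ s := by
        apply div_le_self (mul_nonneg (by linarith) h2.le)
        linarith
      have h4 : s * x ^ s * Dd s x + 2 * cc s * x ^ s ≤ x ^ s * Dd s x := by
        have h5 : 2 * cc s = 1 - s := by rw [hc]; ring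
        have h6 : 0 ≤ x ^ s * ((Dd s x - 1) * (1 - s)) :=
          mul_nonneg h2.le (mul_nonneg (by linarith) (by linarith))
        nlinarith [h6]
      calc (s * x ^ s * Dd s x + 2 * cc s * x ^ s / (x + 1)) * Dd s x ^ 2
          ≤ (x ^ s * Dd s x) * Dd s x ^ 2 := by nlinarith
        _ = x ^ s * Dd s x ^ 3 := by ring
    simpa using sub_nonpos.2 key

lemma denom_lt (hs1 : s < 1) {a : ℝ} (ha : 0 < a) :
    ∀ᶠ t in Filter.atTop, (1 + cc s * Real.log (1 + t)) ^ 2 ≤ t ^ (a / 2) := by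
  have hc := cc_pos (s := s) hs1
  have h1 := (isLittleO_log_rpow_atTop (show (0:ℝ) < a/4 by linarith)).def
    (show (0:ℝ) < 1/(2*cc s) by positivity)
  have h2 := (tendsto_rpow_atTop (show (0:ℝ) < a/4 by linarith)).eventually_ge_atTop
    (2 * (1 + cc s * Real.log 2))
  filter_upwards [h1, h2, eventually_ge_atTop (1:ℝ)] with t hb1 hb2 ht1
  have ht0 : (0:ℝ) < t := by linarith
  have hr4 : (0:ℝ) ≤ t ^ (a/4) := Real.rpow_nonneg ht0.le _
  have hlog : Real.log (1 + t) ≤ Real.log 2 + Real.log t := by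
    rw [← Real.log_mul (by norm_num) ht0.ne']
    exact Real.log_le_log (by linarith) (by linarith)
  have hlt : cc s * Real.log t ≤ t ^ (a/4) / 2 := by
    have hab : |Real.log t| ≤ 1/(2*cc s) * |t ^ (a/4)| := by
      simpa [Real.norm_eq_abs] using hb1
    rw [abs_of_nonneg hr4] at hab
    have h5 : Real.log t ≤ 1/(2*cc s) * t ^ (a/4) := (le_abs_self _).trans hab
    calc cc s * Real.log t ≤ cc s * (1/(2*cc s) * t ^ (a/4)) :=
          mul_le_mul_of_nonneg_left h5 hc.le
      _ = t ^ (a/4) / 2 := by field_simp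
  have hD4 : 1 + cc s * Real.log (1 + t) ≤ t ^ (a/4) := by
    have hm : cc s * Real.log (1 + t) ≤ cc s * (Real.log 2 + Real.log t) :=
      mul_le_mul_of_nonneg_left hlog hc.le
    nlinarith [hb2]
  have hDpos : (0:ℝ) ≤ 1 + cc s * Real.log (1 + t) := by
    have : (0:ℝ) ≤ Real.log (1 + t) := Real.log_nonneg (by linarith)
    nlinarith
  calc (1 + cc s * Real.log (1 + t)) ^ 2 ≤ (t ^ (a/4)) ^ 2 := by nlinarith
    _ = t ^ (a/2) := by
        rw [← Real.rpow_natCast (t ^ (a/4)) 2, ← Real.rpow_mul ht0.le]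
        congr 1; ring

lemma tendsto_aux (hs1 : s < 1) {a : ℝ} (ha : 0 < a) :
    Filter.Tendsto (fun t : ℝ => t ^ a / (1 + cc s * Real.log (1 + t)) ^ 2)
      Filter.atTop Filter.atTop := by
  have hc := cc_pos (s := s) hs1
  refine tendsto_atTop_mono' _ ?_ (tendsto_rpow_atTop (show (0:ℝ) < a/2 by linarith))
  filter_upwards [denom_lt hs1 ha, eventually_gt_atTop (0:ℝ), eventually_ge_atTop (1:ℝ)]
    with t hden ht0 ht1
  have hL : (0:ℝ) ≤ Real.log (1 + t) := Real.log_nonneg (by linarith)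
  have hD1 : (0:ℝ) < (1 + cc s * Real.log (1 + t)) ^ 2 := by positivity
  have h1 : t ^ a / t ^ (a/2) ≤ t ^ a / (1 + cc s * Real.log (1 + t)) ^ 2 := by
    gcongr
  calc t ^ (a/2) = t ^ a / t ^ (a/2) := by
        rw [← Real.rpow_sub ht0]; congr 1; ring
    _ ≤ _ := h1

end Stmt4Aux

theorem stmt4 (s : ℝ) (hs0 : 0 < s) (hs1 : s < 1) :
    ∃ f : ℝ → ℝ, IsGauge f ∧
      Filter.Tendsto (fun x => f x / x) (nhdsWithin 0 (Set.Ioi 0)) Filter.atTop ∧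
      RatioDecreasing f ∧
      Summable (fun q : ℕ => ((q : ℝ) + 1) * f (((q : ℝ) + 1) ^ (-(2 / s)))) ∧
      ∀ r : ℝ, s < r → r ≤ 1 → ¬ LeStar f (fun x => x ^ r) := by
  have hc := cc_pos (s := s) hs1
  refine ⟨ff s, ⟨ff_contOn hs1, fun x hx => ff_pos hs1 hx, ff_mono hs0 hs1, ?_⟩,
    ?_, ff_ratio hs0 hs1, ?_, ?_⟩
  · -- tendsto 0 at 0+
    have hg : Filter.Tendsto (fun x : ℝ => x ^ s) (nhdsWithin 0 (Set.Ioi 0)) (nhds 0) := by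
      have h := (Real.continuousAt_rpow_const 0 s (Or.inr hs0.le)).tendsto
      rw [Real.zero_rpow hs0.ne'] at h
      exact h.mono_left nhdsWithin_le_nhds
    refine squeeze_zero' ?_ ?_ hg
    · filter_upwards [self_mem_nhdsWithin] with x hx
      exact (ff_pos hs1 hx).le
    · filter_upwards [self_mem_nhdsWithin] with x hx
      have hD := Dd_ge_one hs1 (Set.mem_Ioi.1 hx)
      exact div_le_self (Real.rpow_nonneg (le_of_lt hx) s) (by nlinarith)
  · -- ratio tendsto atTop
    have h := (tendsto_aux hs1 (show (0:ℝ) < 1 - s by linarith)).comp tendsto_inv_nhdsGT_zero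
    refine h.congr' ?_
    filter_upwards [self_mem_nhdsWithin] with x hx
    have hx0 : (0:ℝ) < x := hx
    have hD : 1 ≤ Dd s x := Dd_ge_one hs1 hx0
    have hxs : x ^ (s - 1) * x = x ^ s := by
      rw [← Real.rpow_add_one hx0.ne' (s - 1)]; ring_nf
    show x⁻¹ ^ (1 - s) / (1 + cc s * Real.log (1 + x⁻¹)) ^ 2 = ff s x / x
    have e1 : x⁻¹ ^ (1 - s) = x ^ (s - 1) := by
      rw [Real.inv_rpow hx0.le, ← Real.rpow_neg hx0.le]
      congr 1; ring
    have e2 : (1 + cc s * Real.log (1 + x⁻¹)) ^ 2 = (Dd s x) ^ 2 := rfl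
    rw [e1, e2, show ff s x = x ^ s / (Dd s x) ^ 2 from rfl, div_div,
      div_eq_div_iff (by positivity) (by positivity)]
    linear_combination (Dd s x ^ 2) * hxs
  · -- summable
    set b : ℝ := 2 * cc s / s with hb
    clear_value b
    have hbpos : 0 < b := by rw [hb]; positivity
    have hlog2 : (0:ℝ) < Real.log 2 := Real.log_pos one_lt_two
    set B : ℝ := b * Real.log 2 with hB
    clear_value B
    have hBpos : 0 < B := by rw [hB]; positivity
    have hF : Summable (fun n : ℕ => 1 / ((n:ℝ) * (1 + b * Real.log n) ^ 2)) := by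
      rw [← summable_condensed_iff_of_nonneg]
      · have h0 := (Real.summable_one_div_nat_add_rpow B⁻¹ 2).2 one_lt_two
        refine ((h0.mul_left (B⁻¹ ^ 2)).congr fun k => ?_)
        have hk : (0:ℝ) < (k:ℝ) + B⁻¹ := by positivity
        have h2k : ((2:ℝ)) ^ (k:ℕ) ≠ 0 := by positivity
        have hBk : (0:ℝ) < 1 + B * k := by positivity
        have hc1 : ((2 ^ k : ℕ) : ℝ) = (2:ℝ) ^ k := by push_cast; ring
        rw [hc1, Real.log_pow]
        rw [abs_of_nonneg hk.le, show ((2:ℝ)) = ((2:ℕ):ℝ) by norm_num, Real.rpow_natCast]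
        simp only [Nat.cast_ofNat]
        rw [hB]
        field_simp
        ring
      · intro n
        positivity
      · intro m n hm hmn
        have h1 : (1:ℝ) ≤ (m:ℝ) := by exact_mod_cast hm
        have h2 : (m:ℝ) ≤ (n:ℝ) := by exact_mod_cast hmn
        have hlm : 0 ≤ Real.log m := Real.log_nonneg h1
        have hll : Real.log m ≤ Real.log n := Real.log_le_log (by linarith) h2
        have hdm : (0:ℝ) < (m:ℝ) * (1 + b * Real.log m) ^ 2 := by
          have : (0:ℝ) < 1 + b * Real.log m := by nlinarith
          have : (0:ℝ) < (1 + b * Real.log m) ^ 2 := by positivity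
          nlinarith
        apply one_div_le_one_div_of_le hdm
        have hle : 1 + b * Real.log m ≤ 1 + b * Real.log n := by nlinarith
        have h0m : (0:ℝ) ≤ 1 + b * Real.log m := by nlinarith
        have := pow_le_pow_left₀ h0m hle 2
        nlinarith [sq_nonneg (1 + b * Real.log m)]
    have hF1 : Summable (fun q : ℕ => 1 / (((q:ℝ) + 1) * (1 + b * Real.log ((q:ℝ) + 1)) ^ 2)) := by
      have := (summable_nat_add_iff 1).2 hF
      refine this.congr fun q => ?_
      push_cast
      ring_nf
    refine Summable.of_nonneg_of_le (fun q => ?_) (fun q => ?_) hF1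
    · have hQ : (0:ℝ) < (q:ℝ) + 1 := by positivity
      exact mul_nonneg hQ.le (ff_pos hs1 (Real.rpow_pos_of_pos hQ _)).le
    · set Q : ℝ := (q:ℝ) + 1 with hQdef
      clear_value Q
      have hQ1 : (1:ℝ) ≤ Q := by rw [hQdef]; push_cast; linarith [Nat.cast_nonneg (α := ℝ) q]
      have hQ0 : (0:ℝ) < Q := by linarith
      set z : ℝ := Q ^ (-(2/s)) with hz
      clear_value z
      have hz0 : 0 < z := by rw [hz]; exact Real.rpow_pos_of_pos hQ0 _
      have hzs : z ^ s = Q ^ (-2 : ℝ) := by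
        rw [hz, ← Real.rpow_mul hQ0.le]
        congr 1
        field_simp
      have hzi : z⁻¹ = Q ^ (2/s) := by
        rw [hz, ← Real.rpow_neg hQ0.le]
        congr 1; ring
      have hq2 : Q ^ (-2:ℝ) = (Q^2)⁻¹ := by
        rw [show ((-2:ℝ)) = -((2:ℕ):ℝ) by norm_num, Real.rpow_neg hQ0.le, Real.rpow_natCast]
      have hDz : 1 + b * Real.log Q ≤ Dd s z := by
        have hrp : (0:ℝ) < Q ^ (2/s) := Real.rpow_pos_of_pos hQ0 _
        have hlr : Real.log (Q ^ (2/s)) ≤ Real.log (1 + z⁻¹) := by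
          rw [hzi]
          exact Real.log_le_log hrp (by linarith)
        rw [Real.log_rpow hQ0] at hlr
        have : b * Real.log Q = cc s * (2/s * Real.log Q) := by rw [hb]; field_simp
        unfold Dd
        nlinarith
      have hlQ : 0 ≤ Real.log Q := Real.log_nonneg hQ1
      have hbl0 : (0:ℝ) < 1 + b * Real.log Q := by nlinarith
      obtain ⟨E, hE⟩ : ∃ E : ℝ, E = Dd s z := ⟨_, rfl⟩
      rw [← hE] at hDz
      have hDz1 : (0:ℝ) < E := lt_of_lt_of_le hbl0 hDz
      have e4 : Q * ff s z = 1 / (Q * E ^ 2) := by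
        rw [show ff s z = z ^ s / (Dd s z) ^ 2 from rfl, hzs, hq2, ← hE]
        field_simp
      rw [e4]
      clear hE e4 hz hzs hzi hq2 hz0
      apply one_div_le_one_div_of_le (mul_pos hQ0 (pow_pos hbl0 2))
      have h5 : (1 + b * Real.log Q) ^ 2 ≤ E ^ 2 := by nlinarith
      exact mul_le_mul_of_nonneg_left h5 hQ0.le
  · -- condition 4
    intro r hsr hr1 hle
    obtain ⟨δ, hδ, hbound⟩ := hle
    have h := (tendsto_aux hs1 (show (0:ℝ) < r - s by linarith)).eventually_gt_atTop 1
    obtain ⟨t, ht, hgt⟩ := (h.and (Filter.eventually_gt_atTop (max δ⁻¹ 1))).exists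
    have ht1 : (1:ℝ) < t := lt_of_le_of_lt (le_max_right _ _) hgt
    have ht0 : (0:ℝ) < t := by linarith
    set x : ℝ := t⁻¹ with hxdef
    clear_value x
    have hx0 : (0:ℝ) < x := by rw [hxdef]; positivity
    have hxδ : x < δ := by
      have hδt : δ⁻¹ < t := lt_of_le_of_lt (le_max_left _ _) hgt
      rw [hxdef]
      calc t⁻¹ < (δ⁻¹)⁻¹ := by
            apply inv_strictAnti₀ (by positivity) hδt
        _ = δ := inv_inv δ
    have hfb := hbound x hx0 hxδ
    have hxx : x⁻¹ = t := by rw [hxdef]; exact inv_inv t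
    have hL : (0:ℝ) < Real.log (1 + t) := Real.log_pos (by linarith)
    set V : ℝ := (1 + cc s * Real.log (1 + t)) ^ 2 with hV
    clear_value V
    have hV0 : (0:ℝ) < V := by rw [hV]; positivity
    have hVlt : V < t ^ (r - s) := (one_lt_div hV0).1 ht
    have hfz : ff s x = x ^ s / V := by
      rw [show ff s x = x ^ s / (Dd s x) ^ 2 from rfl]
      unfold Dd
      rw [hxx, hV]
    rw [hfz] at hfb
    have hxr : (0:ℝ) < x ^ r := Real.rpow_pos_of_pos hx0 r
    have h6 : x ^ s ≤ x ^ r * V := by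
      rw [div_le_iff₀ hV0] at hfb
      linarith
    have h7 : t ^ (r - s) ≤ V := by
      have e5 : x ^ s / x ^ r = t ^ (r - s) := by
        rw [← Real.rpow_sub hx0, hxdef, Real.inv_rpow ht0.le, ← Real.rpow_neg ht0.le]
        congr 1; ring
      rw [← e5, div_le_iff₀ hxr]
      linarith [mul_comm (x ^ r) V]
    linarith
end

section
/- For a set A ⊆ 2^ω of positive Lebesgue (uniform coin-flipping) measure and any gauge function f, H^f(A) > 0 if and only if liminf_{x→0+} x^{-1}f(x) > 0. -/
open Filter Set

noncomputable section Aux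

lemma two_rpow_neg_nat (m : ℕ) : (2:ℝ) ^ (-(m:ℝ)) = (1/2)^m := by
  rw [Real.rpow_neg (by norm_num), Real.rpow_natCast]; simp [inv_pow]

def infCost (f : ℝ → ℝ) (A : Set (ℕ → Bool)) (n : ℕ) : ENNReal :=
  ⨅ (C : ℕ → Option (List Bool)) (_ : A ⊆ ⋃ i, cylOpt (C i))
    (_ : ∀ i σ, C i = some σ → n ≤ σ.length), ∑' i, gaugeCost f (C i)

lemma Hf_eq (f : ℝ → ℝ) (A : Set (ℕ → Bool)) : Hf f A = ⨆ n, infCost f A n := rfl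

lemma infCost_le (f : ℝ → ℝ) (A : Set (ℕ → Bool)) (n : ℕ) (C : ℕ → Option (List Bool))
    (hcov : A ⊆ ⋃ i, cylOpt (C i)) (hlen : ∀ i σ, C i = some σ → n ≤ σ.length) :
    infCost f A n ≤ ∑' i, gaugeCost f (C i) :=
  iInf_le_of_le C (iInf_le_of_le hcov (iInf_le_of_le hlen le_rfl))

lemma infCost_mono (f : ℝ → ℝ) (A : Set (ℕ → Bool)) : Monotone (infCost f A) :=
  fun _n _m h =>
    le_iInf fun C => le_iInf fun hcov => le_iInf fun hlen =>
      infCost_le f A _ C hcov (fun i σ hi => h.trans (hlen i σ hi))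

lemma exists_cover (m : ℕ) : ∃ C : ℕ → Option (List Bool),
    (∀ y : ℕ → Bool, y ∈ ⋃ i, cylOpt (C i)) ∧
    (∀ i σ, C i = some σ → σ.length = m) ∧
    (∀ f : ℝ → ℝ, ∑' i, gaugeCost f (C i) = 2^m * ENNReal.ofReal (f ((2:ℝ)^(-(m:ℝ))))) := by
  have hcard : Fintype.card (Fin m → Bool) = 2^m := by simp
  let e : (Fin m → Bool) ≃ Fin (2^m) := Fintype.equivFinOfCardEq hcard
  refine ⟨fun i => if h : i < 2^m then some (List.ofFn (e.symm ⟨i, h⟩)) else none, ?_, ?_, ?_⟩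
  · intro y
    set g : Fin m → Bool := fun j => y j with hg
    refine mem_iUnion.mpr ⟨(e g : Fin (2^m)), ?_⟩
    have h : ((e g : Fin (2^m)) : ℕ) < 2^m := (e g).isLt
    dsimp only
    rw [dif_pos h, Fin.eta, e.symm_apply_apply]
    intro k hk
    simp only [List.get_ofFn]
    simp [hg]
  · intro i σ h
    dsimp only at h
    split at h
    · cases h; simp
    · exact absurd h (by simp)
  · intro f
    rw [tsum_eq_sum (s := Finset.range (2^m)) (by
      intro i hi
      dsimp only
      rw [dif_neg (by simpa using hi)]
      rfl)]
    have hterm : ∀ i ∈ Finset.range (2^m),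
        gaugeCost f (if h : i < 2^m then some (List.ofFn (e.symm ⟨i, h⟩)) else none)
          = ENNReal.ofReal (f ((2:ℝ)^(-(m:ℝ)))) := by
      intro i hi
      rw [dif_pos (Finset.mem_range.mp hi)]
      simp [gaugeCost]
    rw [Finset.sum_congr rfl hterm, Finset.sum_const, Finset.card_range, nsmul_eq_mul]
    norm_cast

lemma hf_zero_of_liminf (f : ℝ → ℝ) (hf : IsGauge f) (A : Set (ℕ → Bool))
    (h0 : Filter.liminf (fun x : ℝ => ENNReal.ofReal (f x / x)) (nhdsWithin 0 (Set.Ioi 0)) = 0) :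
    Hf f A = 0 := by
  classical
  have key : ∀ (n : ℕ) (ε : ℝ), 0 < ε → infCost f A n ≤ ENNReal.ofReal ε := by
    intro n ε hε
    have hlt : Filter.liminf (fun x : ℝ => ENNReal.ofReal (f x / x)) (nhdsWithin 0 (Set.Ioi 0))
        < ENNReal.ofReal (ε/2) := by
      rw [h0]; exact ENNReal.ofReal_pos.mpr (by linarith)
    have hfr := Filter.frequently_lt_of_liminf_lt (by isBoundedDefault) hlt
    have hIoo : ∀ᶠ x in nhdsWithin (0:ℝ) (Set.Ioi 0), x ∈ Ioo (0:ℝ) ((1/2:ℝ)^n) :=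
      Ioo_mem_nhdsGT_of_mem ⟨le_rfl, by positivity⟩
    obtain ⟨x, hx, hx0, hxn⟩ := (hfr.and_eventually hIoo).exists
    have hfx : f x / x < ε/2 := (ENNReal.ofReal_lt_ofReal_iff (by linarith)).1 hx
    have hex : ∃ m, (1/2:ℝ)^m ≤ x :=
      (exists_pow_lt_of_lt_one hx0 (by norm_num)).imp fun m h => le_of_lt h
    set m := Nat.find hex with hmdef
    have hm : (1/2:ℝ)^m ≤ x := Nat.find_spec hex
    have hxlt1 : x < 1 := lt_of_lt_of_le hxn (pow_le_one₀ (by norm_num) (by norm_num))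
    have hmpos : 0 < m := by
      rcases Nat.eq_zero_or_pos m with h | h
      · exfalso; rw [h] at hm; simp at hm; linarith
      · exact h
    have hup : x < (1/2:ℝ)^(m-1) := lt_of_not_ge (Nat.find_min hex (by omega))
    have hnm : n ≤ m := by
      have h1 : (1/2:ℝ)^m < (1/2)^n := lt_of_le_of_lt hm hxn
      exact le_of_lt ((pow_lt_pow_iff_right_of_lt_one₀ (by norm_num) (by norm_num)).1 h1)
    have hx2 : x < 2 * (1/2:ℝ)^m := by
      have hms : m - 1 + 1 = m := Nat.succ_pred_eq_of_pos hmpos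
      have hps := pow_succ (1/2:ℝ) (m-1)
      rw [hms] at hps
      linarith
    have hfm : f ((1/2:ℝ)^m) ≤ ε * (1/2)^m := by
      have h1 : f ((1/2:ℝ)^m) ≤ f x :=
        hf.2.2.1 (mem_Ioi.mpr (by positivity)) (mem_Ioi.mpr hx0) hm
      have h2 : f x < (ε/2) * x := by
        have := (div_lt_iff₀ hx0).1 hfx
        linarith
      nlinarith
    obtain ⟨C, hcov, hlen, hsum⟩ := exists_cover m
    refine le_trans (infCost_le f A n C (fun y _ => hcov y)
      (fun i σ h => hnm.trans (hlen i σ h).ge)) ?_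
    rw [hsum f]
    have hle : ENNReal.ofReal (f ((2:ℝ)^(-(m:ℝ)))) ≤ ENNReal.ofReal (ε * (1/2)^m) := by
      rw [two_rpow_neg_nat]; exact ENNReal.ofReal_le_ofReal hfm
    calc (2:ENNReal)^m * ENNReal.ofReal (f ((2:ℝ)^(-(m:ℝ))))
        ≤ (2:ENNReal)^m * ENNReal.ofReal (ε * (1/2)^m) := mul_le_mul_right hle _
      _ = ENNReal.ofReal ε := by
          rw [show ((2:ENNReal)^m) = ENNReal.ofReal ((2:ℝ)^m) by
            rw [ENNReal.ofReal_pow (by norm_num)]; norm_num]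
          rw [← ENNReal.ofReal_mul (by positivity)]
          congr 1
          rw [one_div, inv_pow, mul_comm ε, ← mul_assoc,
            mul_inv_cancel₀ (by positivity), one_mul]
  rw [Hf_eq]
  refine le_antisymm (iSup_le fun n => ?_) zero_le
  refine ENNReal.le_of_forall_pos_le_add fun ε hε _ => ?_
  rw [zero_add]
  have h := key n ε (by exact_mod_cast hε)
  rwa [ENNReal.ofReal_coe_nnreal] at h

lemma hf_pos_of_liminf (f : ℝ → ℝ) (hf : IsGauge f) (A : Set (ℕ → Bool)) (hA : 0 < muC A)
    (hlim : 0 < Filter.liminf (fun x : ℝ => ENNReal.ofReal (f x / x))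
      (nhdsWithin 0 (Set.Ioi 0))) : 0 < Hf f A := by
  obtain ⟨c, hc0, hcl⟩ := exists_between hlim
  have hev := Filter.eventually_lt_of_lt_liminf hcl
  rw [Filter.eventually_iff] at hev
  obtain ⟨u, hu, hsub⟩ := mem_nhdsGT_iff_exists_Ioo_subset.mp hev
  obtain ⟨N, hN⟩ := exists_pow_lt_of_lt_one hu (show (1/2:ℝ) < 1 by norm_num)
  have key : ∀ o : Option (List Bool), (∀ σ, o = some σ → N ≤ σ.length) →
      c * gaugeCost (fun x => x) o ≤ gaugeCost f o := by
    rintro (_|σ) ho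
    · simp [gaugeCost]
    · have hlN : N ≤ σ.length := ho σ rfl
      set x : ℝ := (2:ℝ)^(-(σ.length:ℝ)) with hxdef
      have hx0 : 0 < x := Real.rpow_pos_of_pos (by norm_num) _
      have hxu : x < u := by
        calc x ≤ (1/2:ℝ)^N := by
              rw [hxdef, two_rpow_neg_nat]
              exact pow_le_pow_of_le_one (by norm_num) (by norm_num) hlN
          _ < u := hN
      have hc : c < ENNReal.ofReal (f x / x) := hsub ⟨hx0, hxu⟩
      show c * ENNReal.ofReal x ≤ ENNReal.ofReal (f x)
      have hfx0 : 0 ≤ f x := (hf.2.1 x hx0).le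
      have heq : ENNReal.ofReal (f x) = ENNReal.ofReal (f x / x) * ENNReal.ofReal x := by
        rw [← ENNReal.ofReal_mul (div_nonneg hfx0 hx0.le), div_mul_cancel₀ _ (ne_of_gt hx0)]
      rw [heq]
      exact mul_le_mul_left hc.le _
  have main : c * muC A ≤ Hf f A := by
    have hmu : muC A = ⨆ n, infCost (fun x => x) A n := rfl
    rw [hmu, ENNReal.mul_iSup]
    refine iSup_le fun n => ?_
    have h1 : c * infCost (fun x => x) A (max n N) ≤ infCost f A (max n N) := by
      refine le_iInf fun C => le_iInf fun hcov => le_iInf fun hlen => ?_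
      calc c * infCost (fun x => x) A (max n N)
          ≤ c * ∑' i, gaugeCost (fun x => x) (C i) :=
            mul_le_mul_right (infCost_le _ _ _ C hcov hlen) c
        _ = ∑' i, c * gaugeCost (fun x => x) (C i) := ENNReal.tsum_mul_left.symm
        _ ≤ ∑' i, gaugeCost f (C i) := ENNReal.tsum_le_tsum fun i =>
            key (C i) (fun σ h => le_trans (le_max_right n N) (hlen i σ h))
    calc c * infCost (fun x => x) A n
        ≤ c * infCost (fun x => x) A (max n N) :=
          mul_le_mul_right (infCost_mono _ _ (le_max_left n N)) c
      _ ≤ infCost f A (max n N) := h1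
      _ ≤ Hf f A := by rw [Hf_eq]; exact le_iSup (infCost f A) (max n N)
  exact lt_of_lt_of_le (ENNReal.mul_pos hc0.ne' hA.ne') main


end Aux

theorem stmt6 (f : ℝ → ℝ) (hf : IsGauge f) (A : Set (ℕ → Bool)) (hA : 0 < muC A) :
    0 < Hf f A ↔
      0 < Filter.liminf (fun x : ℝ => ENNReal.ofReal (f x / x))
            (nhdsWithin 0 (Set.Ioi 0)) := by
  constructor
  · intro h
    by_contra h0
    have hz : Filter.liminf (fun x : ℝ => ENNReal.ofReal (f x / x))
        (nhdsWithin 0 (Set.Ioi 0)) = 0 := le_antisymm (not_lt.mp h0) zero_le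
    exact absurd (hf_zero_of_liminf f hf A hz) h.ne'
  · exact hf_pos_of_liminf f hf A hA
end

section
/- With T and δ as above, and f a gauge function with x^{-1}f(x) monotonically decreasing and f(2^{-l_{n+1}}) > 2^{-l_{n+1}·r_n*} for all n: for any A ⊆ 2^ω, if the uniform measure μ(A) > 0 then H^f(δ(A)) > 0. -/
open Filter Set

noncomputable section StmtTenAux

namespace StmtTen

/-- Lower endpoint of the `n`-th forced interval. -/
def aF (rstar : ℕ → ℝ) (l : ℕ → ℕ) (n : ℕ) : ℝ :=
  rstar n * (l (n+1) : ℝ) + (1 - prevR rstar n) * (l n : ℝ)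

lemma forced_iff (rstar : ℕ → ℝ) (l : ℕ → ℕ) (k : ℕ) :
    Forced rstar l k ↔ ∃ n, aF rstar l n ≤ (k:ℝ) ∧ k < l (n+1) := Iff.rfl

lemma prevR_le_one {rstar : ℕ → ℝ} (hrm : ∀ n, rstar n ≤ 1) : ∀ n, prevR rstar n ≤ 1
  | 0 => le_refl 1
  | (n+1) => hrm n

lemma rstar_le_prevR {rstar : ℕ → ℝ} (hra : Antitone rstar) (hrm : ∀ n, rstar n ≤ 1) :
    ∀ n, rstar n ≤ prevR rstar n
  | 0 => hrm 0
  | (n+1) => hra (Nat.le_succ n)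

section Counting

variable (rstar : ℕ → ℝ) (l : ℕ → ℕ)

open Classical in
/-- number of forced levels below `x` whose witness interval has index `< J` -/
def NJ (x : ℝ) (J : ℕ) : ℕ :=
  ((Finset.range (l J)).filter
    (fun k : ℕ => (k:ℝ) < x ∧ ∃ j, j < J ∧ aF rstar l j ≤ (k:ℝ) ∧ k < l (j+1))).card

variable {rstar l}

open Classical in
lemma freeCount_succ (m : ℕ) :
    freeCount rstar l (m+1) =
      freeCount rstar l m + (if Forced rstar l m then 0 else 1) := by
  classical
  unfold freeCount
  rw [Finset.range_add_one, Finset.filter_insert]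
  by_cases h : Forced rstar l m
  · simp [h]
  · have hnm : m ∉ (Finset.range m).filter (fun k => ¬ Forced rstar l k) := by
      simp
    simp [h, Finset.card_insert_of_notMem hnm]

lemma freeCount_mono : Monotone (freeCount rstar l) := by
  classical
  intro m m' h
  unfold freeCount
  exact Finset.card_le_card (Finset.filter_subset_filter _
    (Finset.range_subset_range.mpr h))

lemma freeCount_surj {i m : ℕ} (h : i < freeCount rstar l m) :
    ∃ k < m, ¬ Forced rstar l k ∧ freeCount rstar l k = i := by
  classical
  induction m with
  | zero => simp [freeCount] at h
  | succ m ih =>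
    rw [freeCount_succ] at h
    by_cases hF : Forced rstar l m
    · simp [hF] at h
      obtain ⟨k, hk, h1, h2⟩ := ih h
      exact ⟨k, Nat.lt_succ_of_lt hk, h1, h2⟩
    · simp [hF] at h
      rcases Nat.lt_or_eq_of_le h with h | h
      · obtain ⟨k, hk, h1, h2⟩ := ih h
        exact ⟨k, Nat.lt_succ_of_lt hk, h1, h2⟩
      · exact ⟨m, Nat.lt_succ_self m, hF, h.symm⟩

open Classical in
/-- The central combinatorial estimate: the forced levels below `aF`-type
cutoffs with witnesses of index `< J` number at most `(1 - prevR J) · l J`. -/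
lemma claimH (hra : Antitone rstar) (hr1 : ∀ n, rstar n ≤ 1)
    (hl : StrictMono l) :
    ∀ J : ℕ, ∀ x : ℝ, (NJ rstar l x J : ℝ) ≤ (1 - prevR rstar J) * (l J : ℝ) := by
  intro J
  induction J using Nat.strong_induction_on with
  | _ J IH =>
    intro x
    classical
    set F := (Finset.range (l J)).filter
      (fun k : ℕ => (k:ℝ) < x ∧ ∃ j, j < J ∧ aF rstar l j ≤ (k:ℝ) ∧ k < l (j+1)) with hFdef
    rcases F.eq_empty_or_nonempty with hF | hF
    · have : NJ rstar l x J = 0 := by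
        unfold NJ; rw [← hFdef, hF]; simp
      rw [this]
      have h1 := prevR_le_one hr1 J
      have : (0:ℝ) ≤ (1 - prevR rstar J) * (l J : ℝ) :=
        mul_nonneg (by linarith) (Nat.cast_nonneg _)
      simpa using this
    · obtain ⟨kmax, hkmaxF, hkmaxmax⟩ := F.exists_max_image id hF
      have hkmem := hkmaxF
      rw [hFdef, Finset.mem_filter, Finset.mem_range] at hkmem
      obtain ⟨hkl, hkx, j0, hj0J, hj0a, hj0l⟩ := hkmem
      set S₁ := (Finset.range J).filter
        (fun j => aF rstar l j ≤ (kmax:ℝ) ∧ kmax < l (j+1)) with hS₁def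
      have hj0S : j0 ∈ S₁ := by
        rw [hS₁def, Finset.mem_filter, Finset.mem_range]
        exact ⟨hj0J, hj0a, hj0l⟩
      obtain ⟨j₁, hj₁S, hj₁min⟩ := S₁.exists_min_image (aF rstar l) ⟨j0, hj0S⟩
      rw [hS₁def, Finset.mem_filter, Finset.mem_range] at hj₁S
      obtain ⟨hj₁J, haj₁, hkl₁⟩ := hj₁S
      set F₁ := (Finset.range (l j₁)).filter
        (fun k : ℕ => (k:ℝ) < aF rstar l j₁ ∧
          ∃ j, j < j₁ ∧ aF rstar l j ≤ (k:ℝ) ∧ k < l (j+1)) with hF₁def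
      set F₂ := Finset.Icc (⌈aF rstar l j₁⌉₊) kmax with hF₂def
      have hsub : F ⊆ F₁ ∪ F₂ := by
        intro k hk
        have hkle : k ≤ kmax := hkmaxmax k hk
        rw [hFdef, Finset.mem_filter, Finset.mem_range] at hk
        obtain ⟨hkl2, hx2, j, hjJ, hja, hjl⟩ := hk
        rw [Finset.mem_union]
        by_cases hcase : (k:ℝ) < aF rstar l j₁
        · left
          have hl2 : ¬ kmax < l (j+1) := by
            intro hcon
            have hjS : j ∈ S₁ := by
              rw [hS₁def, Finset.mem_filter, Finset.mem_range]
              exact ⟨hjJ, hja.trans (Nat.cast_le.mpr hkle), hcon⟩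
            have := hj₁min j hjS
            linarith
          have hjlt : j < j₁ := by
            have h1 : l (j+1) ≤ kmax := Nat.le_of_not_lt hl2
            have h2 : l (j+1) < l (j₁+1) := lt_of_le_of_lt h1 hkl₁
            exact Nat.succ_lt_succ_iff.mp (hl.lt_iff_lt.mp h2)
          have hklt : k < l j₁ := lt_of_lt_of_le hjl (hl.monotone hjlt)
          rw [hF₁def, Finset.mem_filter, Finset.mem_range]
          exact ⟨hklt, hcase, j, hjlt, hja, hjl⟩
        · right
          rw [hF₂def, Finset.mem_Icc]
          exact ⟨Nat.ceil_le.mpr (not_lt.mp hcase), hkle⟩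
      have hc1 : F.card ≤ F₁.card + F₂.card :=
        (Finset.card_le_card hsub).trans (Finset.card_union_le _ _)
      have hIH : (F₁.card : ℝ) ≤ (1 - prevR rstar j₁) * (l j₁ : ℝ) := by
        have := IH j₁ hj₁J (aF rstar l j₁)
        unfold NJ at this
        convert this using 3
      have hceil : ⌈aF rstar l j₁⌉₊ ≤ kmax := Nat.ceil_le.mpr haj₁
      have hF₂c : (F₂.card : ℝ) ≤ (kmax:ℝ) + 1 - aF rstar l j₁ := by
        rw [hF₂def, Nat.card_Icc, Nat.cast_sub (hceil.trans (Nat.le_succ _))]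
        push_cast
        linarith [Nat.le_ceil (aF rstar l j₁)]
      have hky : (kmax:ℝ) + 1 ≤ (l (j₁+1) : ℝ) := by
        exact_mod_cast Nat.succ_le_of_lt hkl₁
      obtain ⟨J', rfl⟩ : ∃ J', J = J' + 1 := ⟨J - 1, by omega⟩
      have hle : rstar J' ≤ rstar j₁ := hra (Nat.lt_succ_iff.mp hj₁J)
      have hlj : (l (j₁+1) : ℝ) ≤ (l (J'+1) : ℝ) :=
        Nat.cast_le.mpr (hl.monotone (Nat.succ_le_of_lt hj₁J))
      have hNJ : (NJ rstar l x (J'+1) : ℝ) = (F.card : ℝ) := by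
        unfold NJ
        norm_cast
      have key : (F.card : ℝ) ≤ (1 - rstar j₁) * (l (j₁+1) : ℝ) := by
        have haFeq : (1 - prevR rstar j₁) * (l j₁ : ℝ) + ((kmax:ℝ) + 1 - aF rstar l j₁)
            = (kmax:ℝ) + 1 - rstar j₁ * (l (j₁+1) : ℝ) := by
          unfold aF; ring
        have hcast : (F.card : ℝ) ≤ (F₁.card : ℝ) + (F₂.card : ℝ) := by
          exact_mod_cast hc1
        nlinarith
      rw [hNJ]
      have h0 : (0:ℝ) ≤ 1 - rstar j₁ := by linarith [hr1 j₁]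
      have hprev : prevR rstar (J'+1) = rstar J' := rfl
      rw [hprev]
      calc (F.card : ℝ) ≤ (1 - rstar j₁) * (l (j₁+1) : ℝ) := key
        _ ≤ (1 - rstar J') * (l (J'+1) : ℝ) := by
            apply mul_le_mul (by linarith) hlj (Nat.cast_nonneg _) (by linarith [hr1 J'])

end Counting

section Key

variable {s : ℝ} {rstar : ℕ → ℝ} {l : ℕ → ℕ} {f : ℝ → ℝ}

lemma rpow_neg_nat (n : ℕ) : (2:ℝ)^(-(n:ℝ)) = (1/2)^n := by
  rw [Real.rpow_neg (by norm_num), Real.rpow_natCast]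
  simp [inv_pow]

lemma exists_rpow_lt {d : ℝ} (hd : 0 < d) : ∃ N : ℕ, ∀ n : ℕ, N ≤ n → (2:ℝ)^(-(n:ℝ)) < d := by
  obtain ⟨N, hN⟩ := exists_pow_lt_of_lt_one hd (by norm_num : (1/2:ℝ) < 1)
  refine ⟨N, fun n hn => ?_⟩
  rw [rpow_neg_nat]
  calc (1/2:ℝ)^n ≤ (1/2)^N := pow_le_pow_of_le_one (by norm_num) (by norm_num) hn
    _ < d := hN

lemma gauge_small (hf : IsGauge f) {ε : ℝ} (hε : 0 < ε) :
    ∃ d : ℝ, 0 < d ∧ ∀ x : ℝ, 0 < x → x < d → f x < ε := by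
  have ht := hf.2.2.2
  have hmem : f ⁻¹' (Set.Iio ε) ∈ nhdsWithin 0 (Set.Ioi 0) := ht (Iio_mem_nhds hε)
  rw [Metric.mem_nhdsWithin_iff] at hmem
  obtain ⟨d, hd, hsub⟩ := hmem
  refine ⟨d, hd, fun x hx hxd => ?_⟩
  have : x ∈ Metric.ball (0:ℝ) d ∩ Set.Ioi 0 := by
    constructor
    · rw [Metric.mem_ball, Real.dist_eq, sub_zero, abs_of_pos hx]
      exact hxd
    · exact hx
  exact hsub this

lemma aF_large (hl : StrictMono l) (hf : IsGauge f)
    (hfl : ∀ n : ℕ, f ((2 : ℝ) ^ (-(l (n + 1) : ℝ)))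
      > (2 : ℝ) ^ (-((l (n + 1) : ℝ) * rstar n))) (c : ℝ) :
    ∃ N : ℕ, ∀ j : ℕ, N ≤ j → c ≤ rstar j * (l (j+1) : ℝ) := by
  have hε : (0:ℝ) < (2:ℝ)^(-c) := Real.rpow_pos_of_pos (by norm_num) _
  obtain ⟨d, hd, hsmall⟩ := gauge_small hf hε
  obtain ⟨N, hN⟩ := exists_rpow_lt hd
  refine ⟨N, fun j hj => ?_⟩
  have hlj : N ≤ l (j+1) := le_trans (hj.trans (Nat.le_succ j)) (hl.le_apply)
  have hx : (0:ℝ) < (2:ℝ)^(-(l (j+1):ℝ)) := Real.rpow_pos_of_pos (by norm_num) _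
  have hxd : (2:ℝ)^(-(l (j+1):ℝ)) < d := hN _ hlj
  have h1 : f ((2:ℝ)^(-(l (j+1):ℝ))) < (2:ℝ)^(-c) := hsmall _ hx hxd
  have h2 : (2:ℝ)^(-((l (j+1):ℝ) * rstar j)) < (2:ℝ)^(-c) := (hfl j).trans h1
  have h3 : -((l (j+1):ℝ) * rstar j) < -c :=
    (Real.rpow_lt_rpow_left_iff (by norm_num : (1:ℝ) < 2)).mp h2
  nlinarith

/-- The key estimate: `f(2^{-m}) ≥ c₀ · 2^{-freeCount m}`. -/
lemma key_estimate (hs0 : 0 ≤ s) (hra : Antitone rstar) (hrm : ∀ n, rstar n ∈ Set.Ioc s 1)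
    (hl : StrictMono l) (hf : IsGauge f) (hdec : RatioDecreasing f)
    (hfl : ∀ n : ℕ, f ((2 : ℝ) ^ (-(l (n + 1) : ℝ)))
      > (2 : ℝ) ^ (-((l (n + 1) : ℝ) * rstar n))) :
    ∀ m : ℕ,
      min (f 1) 1 * (2:ℝ)^(-(freeCount rstar l m : ℝ)) ≤ f ((2:ℝ)^(-(m:ℝ))) := by
  classical
  have hr1 : ∀ n, rstar n ≤ 1 := fun n => (hrm n).2
  have hrpos : ∀ n, 0 < rstar n := fun n => lt_of_le_of_lt hs0 (hrm n).1
  have hprev1 : ∀ n, prevR rstar n ≤ 1 := prevR_le_one hr1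
  intro m
  induction m with
  | zero =>
    have h0 : freeCount rstar l 0 = 0 := by simp [freeCount]
    rw [h0]
    simp only [Nat.cast_zero, neg_zero, Real.rpow_zero, mul_one]
    exact min_le_left _ _
  | succ m ih =>
    by_cases hF : Forced rstar l m
    · -- forced case
      obtain ⟨j0, hj0a, hj0l⟩ := hF
      have hj0a' : aF rstar l j0 ≤ (m:ℝ) := hj0a
      have hm1 : m + 1 ≤ l (j0+1) := hj0l
      obtain ⟨N, hN⟩ := aF_large hl hf hfl ((m:ℝ) + 1)
      have haFge : ∀ j, rstar j * (l (j+1):ℝ) ≤ aF rstar l j := by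
        intro j
        have : (0:ℝ) ≤ (1 - prevR rstar j) * (l j : ℝ) :=
          mul_nonneg (by linarith [hprev1 j]) (Nat.cast_nonneg _)
        unfold aF; linarith
      set S := (Finset.range N).filter
        (fun j : ℕ => m + 1 ≤ l (j+1) ∧ aF rstar l j ≤ (m:ℝ)) with hSdef
      have hj0S : j0 ∈ S := by
        rw [hSdef, Finset.mem_filter, Finset.mem_range]
        refine ⟨?_, hm1, hj0a'⟩
        by_contra hcon
        have := (hN j0 (Nat.le_of_not_lt hcon)).trans (haFge j0)
        linarith
      obtain ⟨js, hjsS, hjsmin⟩ := S.exists_min_image (aF rstar l) ⟨j0, hj0S⟩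
      rw [hSdef, Finset.mem_filter, Finset.mem_range] at hjsS
      obtain ⟨hjsN, hjsl, hjsa⟩ := hjsS
      set c := ⌈aF rstar l js⌉₊ with hcdef
      have hcm : c ≤ m := Nat.ceil_le.mpr hjsa
      have hsub : (Finset.range c).filter (Forced rstar l) ⊆
          (Finset.range (l js)).filter
            (fun k : ℕ => (k:ℝ) < aF rstar l js ∧
              ∃ j, j < js ∧ aF rstar l j ≤ (k:ℝ) ∧ k < l (j+1)) := by
        intro k hk
        rw [Finset.mem_filter, Finset.mem_range] at hk
        obtain ⟨hkc, j, hja, hjl⟩ := hk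
        have hja' : aF rstar l j ≤ (k:ℝ) := hja
        have hklt : (k:ℝ) < aF rstar l js := Nat.lt_ceil.mp hkc
        have hjnot : ¬ (m + 1 ≤ l (j+1)) := by
          intro hcon
          have hjS : j ∈ S := by
            rw [hSdef, Finset.mem_filter, Finset.mem_range]
            refine ⟨?_, hcon, ?_⟩
            · by_contra hc2
              have ha1 := (hN j (Nat.le_of_not_lt hc2)).trans (haFge j)
              have ha2 : (m:ℝ) + 1 ≤ (k:ℝ) := le_trans ha1 hja
              have ha3 : (k:ℝ) < (m:ℝ) := lt_of_lt_of_le hklt hjsa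
              linarith
            · exact hja.trans (le_trans hklt.le hjsa)
          have := hjsmin j hjS
          linarith
        have hjlt : j < js := by
          have h1 : l (j+1) ≤ m := by omega
          have h2 : l (j+1) < l (js+1) := by omega
          exact Nat.succ_lt_succ_iff.mp (hl.lt_iff_lt.mp h2)
        rw [Finset.mem_filter, Finset.mem_range]
        exact ⟨lt_of_lt_of_le hjl (hl.monotone hjlt), hklt, j, hjlt, hja, hjl⟩
      have hcard : ((Finset.range c).filter (Forced rstar l)).card
          ≤ NJ rstar l (aF rstar l js) js := by
        unfold NJ
        apply le_trans (Finset.card_le_card hsub) (le_of_eq ?_)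
        congr 1
      have hH := claimH hra hr1 hl js (aF rstar l js)
      have hsplit : ((Finset.range c).filter (Forced rstar l)).card
          + freeCount rstar l c = c := by
        unfold freeCount
        rw [Finset.card_filter_add_card_filter_not, Finset.card_range]
      have hmono : freeCount rstar l c ≤ freeCount rstar l (m+1) :=
        freeCount_mono (by omega)
      have hfc : rstar js * (l (js+1):ℝ) ≤ (freeCount rstar l (m+1) : ℝ) := by
        have h1 : aF rstar l js ≤ (c:ℝ) := Nat.le_ceil _
        have h2 : (freeCount rstar l c : ℝ)
            ≥ (c:ℝ) - (1 - prevR rstar js) * (l js : ℝ) := by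
          have h3 : ((((Finset.range c).filter (Forced rstar l)).card : ℕ) : ℝ)
              ≤ (1 - prevR rstar js) * (l js : ℝ) :=
            le_trans (Nat.cast_le.mpr hcard) hH
          have h4 : (freeCount rstar l c : ℝ)
              = (c:ℝ) - (((Finset.range c).filter (Forced rstar l)).card : ℝ) := by
            have hc' := congrArg (Nat.cast (R := ℝ)) hsplit
            push_cast at hc'
            linarith
          linarith
        have h5 : (freeCount rstar l c : ℝ) ≤ (freeCount rstar l (m+1) : ℝ) :=
          Nat.cast_le.mpr hmono
        have h6 : aF rstar l js - (1 - prevR rstar js) * (l js : ℝ)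
            = rstar js * (l (js+1):ℝ) := by unfold aF; ring
        linarith
      -- now the analytic chain
      have hx1 : (0:ℝ) < (2:ℝ)^(-(l (js+1):ℝ)) := Real.rpow_pos_of_pos (by norm_num) _
      have hx2 : (0:ℝ) < (2:ℝ)^(-((m+1:ℕ):ℝ)) := Real.rpow_pos_of_pos (by norm_num) _
      have hxle : (2:ℝ)^(-(l (js+1):ℝ)) ≤ (2:ℝ)^(-((m+1:ℕ):ℝ)) := by
        apply Real.rpow_le_rpow_of_exponent_le (by norm_num)
        have : ((m+1:ℕ):ℝ) ≤ (l (js+1):ℝ) := Nat.cast_le.mpr hjsl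
        linarith
      have hmono2 : f ((2:ℝ)^(-(l (js+1):ℝ))) ≤ f ((2:ℝ)^(-((m+1:ℕ):ℝ))) :=
        hf.2.2.1 (Set.mem_Ioi.mpr hx1) (Set.mem_Ioi.mpr hx2) hxle
      have h7 : (2:ℝ)^(-(freeCount rstar l (m+1):ℝ))
          ≤ (2:ℝ)^(-((l (js+1):ℝ) * rstar js)) := by
        apply Real.rpow_le_rpow_of_exponent_le (by norm_num)
        nlinarith
      have h8 := hfl js
      have hmin1 : min (f 1) 1 ≤ 1 := min_le_right _ _
      have hpow : (0:ℝ) < (2:ℝ)^(-(freeCount rstar l (m+1):ℝ)) :=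
        Real.rpow_pos_of_pos (by norm_num) _
      calc min (f 1) 1 * (2:ℝ)^(-(freeCount rstar l (m+1):ℝ))
          ≤ 1 * (2:ℝ)^(-(freeCount rstar l (m+1):ℝ)) := by nlinarith
        _ = (2:ℝ)^(-(freeCount rstar l (m+1):ℝ)) := one_mul _
        _ ≤ (2:ℝ)^(-((l (js+1):ℝ) * rstar js)) := h7
        _ ≤ f ((2:ℝ)^(-(l (js+1):ℝ))) := (h8).le
        _ ≤ f ((2:ℝ)^(-((m+1:ℕ):ℝ))) := hmono2
    · -- free case
      have hfc : freeCount rstar l (m+1) = freeCount rstar l m + 1 := by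
        rw [freeCount_succ, if_neg hF]
      set x := (2:ℝ)^(-(m:ℝ)) with hxdef
      have hx : 0 < x := Real.rpow_pos_of_pos (by norm_num) _
      have hhalf : (2:ℝ)^(-((m+1:ℕ):ℝ)) = x / 2 := by
        rw [hxdef]
        push_cast
        rw [show -((m:ℝ)+1) = -(m:ℝ) + (-1) by ring, Real.rpow_add (by norm_num)]
        rw [Real.rpow_neg_one]
        ring
      have hx2 : 0 < x / 2 := by linarith
      have hratio := hdec (Set.mem_Ioi.mpr hx2) (Set.mem_Ioi.mpr hx) (by linarith)
      have hfx2 : f x / 2 ≤ f (x/2) := by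
        simp only at hratio
        rw [div_le_div_iff₀ hx hx2] at hratio
        nlinarith
      have hpowsucc : (2:ℝ)^(-((freeCount rstar l m + 1 : ℕ):ℝ))
          = (2:ℝ)^(-(freeCount rstar l m:ℝ)) / 2 := by
        push_cast
        rw [show -((freeCount rstar l m:ℝ)+1) = -(freeCount rstar l m:ℝ) + (-1) by ring,
          Real.rpow_add (by norm_num), Real.rpow_neg_one]
        ring
      rw [hfc, hhalf, hpowsucc]
      calc min (f 1) 1 * ((2:ℝ)^(-(freeCount rstar l m:ℝ)) / 2)
          = (min (f 1) 1 * (2:ℝ)^(-(freeCount rstar l m:ℝ))) / 2 := by ring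
        _ ≤ f x / 2 := by linarith
        _ ≤ f (x/2) := hfx2

lemma freeCount_large (hs0 : 0 ≤ s) (hra : Antitone rstar) (hrm : ∀ n, rstar n ∈ Set.Ioc s 1)
    (hl : StrictMono l) (hf : IsGauge f) (hdec : RatioDecreasing f)
    (hfl : ∀ n : ℕ, f ((2 : ℝ) ^ (-(l (n + 1) : ℝ)))
      > (2 : ℝ) ^ (-((l (n + 1) : ℝ) * rstar n)))
    (n₀ : ℕ) : ∃ n₁ : ℕ, n₀ ≤ freeCount rstar l n₁ := by
  have hc₀ : 0 < min (f 1) 1 := lt_min (hf.2.1 1 one_pos) one_pos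
  have hε : 0 < min (f 1) 1 * (2:ℝ)^(-(n₀:ℝ)) :=
    mul_pos hc₀ (Real.rpow_pos_of_pos (by norm_num) _)
  obtain ⟨d, hd, hsmall⟩ := gauge_small hf hε
  obtain ⟨N, hN⟩ := exists_rpow_lt hd
  refine ⟨N, ?_⟩
  have hx : (0:ℝ) < (2:ℝ)^(-(N:ℝ)) := Real.rpow_pos_of_pos (by norm_num) _
  have h1 : f ((2:ℝ)^(-(N:ℝ))) < min (f 1) 1 * (2:ℝ)^(-(n₀:ℝ)) :=
    hsmall _ hx (hN N le_rfl)
  have h2 := key_estimate hs0 hra hrm hl hf hdec hfl N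
  have h3 : (2:ℝ)^(-(freeCount rstar l N:ℝ)) < (2:ℝ)^(-(n₀:ℝ)) := by
    have := lt_of_le_of_lt h2 h1
    nlinarith [Real.rpow_pos_of_pos (show (0:ℝ) < 2 by norm_num) (-(freeCount rstar l N:ℝ))]
  have h4 : -(freeCount rstar l N:ℝ) < -(n₀:ℝ) :=
    (Real.rpow_lt_rpow_left_iff (by norm_num : (1:ℝ) < 2)).mp h3
  have : (n₀:ℝ) < (freeCount rstar l N:ℝ) := by linarith
  exact_mod_cast this.le

end Key

section Geometry

variable {rstar : ℕ → ℝ} {l : ℕ → ℕ}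

lemma mem_cyl_some {x : ℕ → Bool} {σ : List Bool} :
    x ∈ cylOpt (some σ) ↔ ∀ i : ℕ, (h : i < σ.length) → x i = σ.get ⟨i, h⟩ := Iff.rfl

lemma seg_length (x : ℕ → Bool) (n : ℕ) : (seg x n).length = n := by
  simp [seg]

lemma seg_get (x : ℕ → Bool) (n : ℕ) (i : ℕ) (h : i < (seg x n).length) :
    (seg x n).get ⟨i, h⟩ = x i := by
  simp [seg]

lemma delta_agree (σ : List Bool) {x z : ℕ → Bool}
    (hx : deltaMap rstar l x ∈ cylOpt (some σ))
    (hz : deltaMap rstar l z ∈ cylOpt (some σ))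
    {i : ℕ} (hi : i < freeCount rstar l σ.length) : x i = z i := by
  obtain ⟨k, hk, hkF, hkc⟩ := freeCount_surj hi
  have h1 := hx k hk
  have h2 := hz k hk
  unfold deltaMap at h1 h2
  rw [if_neg hkF] at h1 h2
  rw [← hkc]
  rw [h1, h2]

end Geometry

end StmtTen

end StmtTenAux

open StmtTen in
/-- `δ` sends sets of positive uniform measure to sets of positive
`f`-Hausdorff measure. -/
theorem stmt10 (s : ℝ) (hs0 : 0 ≤ s) (hs1 : s < 1)
    (rstar : ℕ → ℝ) (hra : Antitone rstar) (hrm : ∀ n, rstar n ∈ Set.Ioc s 1)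
    (hrt : Filter.Tendsto rstar Filter.atTop (nhds s))
    (l : ℕ → ℕ) (hl : StrictMono l) (hl0 : l 0 = 0) (hlg : ∀ n : ℕ, 2 ^ n < l (n + 1))
    (f : ℝ → ℝ) (hf : IsGauge f) (hdec : RatioDecreasing f)
    (hfl : ∀ n : ℕ, f ((2 : ℝ) ^ (-(l (n + 1) : ℝ)))
      > (2 : ℝ) ^ (-((l (n + 1) : ℝ) * rstar n))) :
    ∀ A : Set (ℕ → Bool), 0 < muC A → 0 < Hf f (deltaMap rstar l '' A) := by
  intro A hA
  classical
  set c₀ : ℝ := min (f 1) 1 with hc₀def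
  have hc₀ : 0 < c₀ := lt_min (hf.2.1 1 one_pos) one_pos
  unfold muC Hf at hA
  rw [lt_iSup_iff] at hA
  obtain ⟨n₀, hn₀⟩ := hA
  obtain ⟨n₁, hn₁⟩ := freeCount_large hs0 hra hrm hl hf hdec hfl n₀
  unfold Hf
  rw [lt_iSup_iff]
  refine ⟨n₁, ?_⟩
  set I₀ : ENNReal := ⨅ (C : ℕ → Option (List Bool)) (_ : A ⊆ ⋃ i, cylOpt (C i))
      (_ : ∀ i σ, C i = some σ → n₀ ≤ σ.length), ∑' i, gaugeCost (fun x => x) (C i)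
    with hI₀
  have hpos : (0:ENNReal) < ENNReal.ofReal c₀ * I₀ :=
    ENNReal.mul_pos (ENNReal.ofReal_pos.mpr hc₀).ne' hn₀.ne'
  refine lt_of_lt_of_le hpos ?_
  refine le_iInf fun C => le_iInf fun hcov => le_iInf fun hlen => ?_
  set proj : List Bool → Option (List Bool) := fun σ =>
    if h : ∃ z : ℕ → Bool, deltaMap rstar l z ∈ cylOpt (some σ) then
      some (seg h.choose (freeCount rstar l σ.length)) else none with hproj
  set C' : ℕ → Option (List Bool) := fun i => (C i).bind proj with hC'
  have hCC : ∀ i, C' i = (C i).bind proj := fun _ => rfl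
  have hcov' : A ⊆ ⋃ i, cylOpt (C' i) := by
    intro x hx
    have hx2 : deltaMap rstar l x ∈ ⋃ i, cylOpt (C i) := hcov ⟨x, hx, rfl⟩
    rw [Set.mem_iUnion] at hx2 ⊢
    obtain ⟨i, hi⟩ := hx2
    refine ⟨i, ?_⟩
    cases hCi : C i with
    | none =>
      rw [hCi] at hi
      exact absurd hi (by simp [cylOpt])
    | some σ =>
      rw [hCi] at hi
      have hex : ∃ z : ℕ → Bool, deltaMap rstar l z ∈ cylOpt (some σ) := ⟨x, hi⟩
      have hCeq : C' i = some (seg hex.choose (freeCount rstar l σ.length)) := by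
        rw [hCC i, hCi]
        simp only [Option.bind_some]
        rw [hproj]
        simp only
        rw [dif_pos hex]
      rw [hCeq]
      intro j hj
      rw [seg_get]
      rw [seg_length] at hj
      exact delta_agree σ hi hex.choose_spec hj
  have hlen' : ∀ i τ, C' i = some τ → n₀ ≤ τ.length := by
    intro i τ h
    rw [hCC i] at h
    cases hCi : C i with
    | none => rw [hCi] at h; simp at h
    | some σ =>
      rw [hCi] at h
      simp only [Option.bind_some] at h
      rw [hproj] at h
      simp only at h
      by_cases hex : ∃ z : ℕ → Bool, deltaMap rstar l z ∈ cylOpt (some σ)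
      · rw [dif_pos hex] at h
        have hτ : τ = seg hex.choose (freeCount rstar l σ.length) :=
          (Option.some.inj h).symm
        rw [hτ, seg_length]
        exact le_trans hn₁ (freeCount_mono (hlen i σ hCi))
      · rw [dif_neg hex] at h
        simp at h
  have hterm : ∀ i, ENNReal.ofReal c₀ * gaugeCost (fun x => x) (C' i)
      ≤ gaugeCost f (C i) := by
    intro i
    cases hCi : C i with
    | none =>
      rw [hCC i]
      simp [hCi, gaugeCost]
    | some σ =>
      rw [hCC i]
      simp only [hCi, Option.bind_some]
      rw [hproj]
      simp only
      by_cases hex : ∃ z : ℕ → Bool, deltaMap rstar l z ∈ cylOpt (some σ)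
      · rw [dif_pos hex]
        simp only [gaugeCost, seg_length]
        rw [← ENNReal.ofReal_mul hc₀.le]
        exact ENNReal.ofReal_le_ofReal
          (key_estimate hs0 hra hrm hl hf hdec hfl σ.length)
      · rw [dif_neg hex]
        simp [gaugeCost]
  calc ENNReal.ofReal c₀ * I₀
      ≤ ENNReal.ofReal c₀ * ∑' i, gaugeCost (fun x => x) (C' i) := by
        apply mul_le_mul_right
        rw [hI₀]
        exact iInf_le_of_le C' (iInf_le_of_le hcov' (iInf_le _ hlen'))
    _ = ∑' i, ENNReal.ofReal c₀ * gaugeCost (fun x => x) (C' i) :=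
        ENNReal.tsum_mul_left.symm
    _ ≤ ∑' i, gaugeCost f (C i) := ENNReal.tsum_le_tsum hterm
end

section
/- If x^{-1}f(x) is monotonically decreasing and, for every r ∈ (s,1], f is not eventually dominated near 0 by x^r, then there exists a gauge function g with lim_{x→0+} f(x)/g(x) = 0 such that x^{-1}g(x) is monotonically decreasing and, for every r ∈ (s,1], g is not eventually dominated near 0 by x^r. -/
open Filter Set

theorem stmt13 (s : ℝ) (hs0 : 0 ≤ s) (hs1 : s < 1)
    (f : ℝ → ℝ) (hf : IsGauge f) (hdec : RatioDecreasing f)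
    (hnd : ∀ r : ℝ, s < r → r ≤ 1 → ¬ LeStar f (fun x => x ^ r)) :
    ∃ g : ℝ → ℝ, IsGauge g ∧
      Filter.Tendsto (fun x => f x / g x) (nhdsWithin 0 (Set.Ioi 0)) (nhds 0) ∧
      RatioDecreasing g ∧
      ∀ r : ℝ, s < r → r ≤ 1 → ¬ LeStar g (fun x => x ^ r) := by
  
  refine ⟨fun x => Real.sqrt (f x), ⟨?_, ?_, ?_, ?_⟩, ?_, ?_, ?_⟩
  · exact Real.continuous_sqrt.comp_continuousOn hf.1
  · exact fun x hx => Real.sqrt_pos.mpr (hf.2.1 x hx)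
  · exact fun a ha b hb hab => Real.sqrt_le_sqrt (hf.2.2.1 ha hb hab)
  · have := (Real.continuous_sqrt.tendsto 0).comp hf.2.2.2
    simpa [Function.comp_def] using this
  · have heq : (fun x => f x / Real.sqrt (f x)) = fun x => Real.sqrt (f x) := by
      funext x; exact Real.div_sqrt
    rw [heq]
    have := (Real.continuous_sqrt.tendsto 0).comp hf.2.2.2
    simpa [Function.comp_def] using this
  · intro a ha b hb hab
    simp only [Set.mem_Ioi] at ha hb
    have hfa := hf.2.1 a ha
    have hfb := hf.2.1 b hb
    have h1 : f b * a ≤ f a * b := by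
      have h2 := hdec ha hb hab
      rw [div_le_div_iff₀ hb ha] at h2
      linarith
    rw [div_le_div_iff₀ hb ha]
    have e1 : Real.sqrt (f b) * a = Real.sqrt (f b * a ^ 2) := by
      rw [Real.sqrt_mul hfb.le, Real.sqrt_sq ha.le]
    have e2 : Real.sqrt (f a) * b = Real.sqrt (f a * b ^ 2) := by
      rw [Real.sqrt_mul hfa.le, Real.sqrt_sq hb.le]
    show Real.sqrt (f b) * a ≤ Real.sqrt (f a) * b
    rw [e1, e2]
    refine Real.sqrt_le_sqrt ?_
    calc f b * a ^ 2 = (f b * a) * a := by ring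
      _ ≤ (f a * b) * a := mul_le_mul_of_nonneg_right h1 ha.le
      _ ≤ (f a * b) * b := mul_le_mul_of_nonneg_left hab (by positivity)
      _ = f a * b ^ 2 := by ring
  · intro r hsr hr1 ⟨δ, hδ, hle⟩
    have h1 : {x : ℝ | f x < 1} ∈ nhdsWithin 0 (Set.Ioi 0) :=
      hf.2.2.2 (Iio_mem_nhds one_pos)
    rw [Metric.mem_nhdsWithin_iff] at h1
    obtain ⟨ε, hε, hsub⟩ := h1
    refine hnd r hsr hr1 ⟨min δ ε, lt_min hδ hε, fun x hx hxd => ?_⟩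
    have hf1 : f x < 1 := hsub ⟨by simpa [abs_of_pos hx] using hxd.trans_le (min_le_right _ _), hx⟩
    have hfx := hf.2.1 x hx
    have hsq : f x ≤ Real.sqrt (f x) := by
      nlinarith [Real.sq_sqrt hfx.le, Real.sqrt_nonneg (f x)]
    exact hsq.trans (hle x hx (hxd.trans_le (min_le_left _ _)))
end

section
/- Let 0 ≤ s < 1 and suppose for every r ∈ (s,1] and every ε > 0 there exists x ∈ (0,ε) with f(x) > x^r, where x^{-1}f(x) is monotonically decreasing. Then there exist sequences (l_n) of integers and (r_n*) of rationals such that: l_0 = 0, l_{n+1} > 2^n + l_n, r_n* = ⌈r_n·l_{n+1}⌉/l_{n+1} for a fixed decreasing sequence r_n → s with r_n > s, (r_n*) is decreasing with r_n* → s, and f(2^{-l_{n+1}}) > 2^{-l_{n+1}·r_n*} for all n. -/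
open Filter Set

lemma key19 (s : ℝ) (hs0 : 0 ≤ s) (hs1 : s < 1) (f : ℝ → ℝ) (hdec : RatioDecreasing f)
    (hbig : ∀ ρ : ℝ, s < ρ → ρ ≤ 1 → ∀ ε : ℝ, 0 < ε → ∃ x : ℝ, 0 < x ∧ x < ε ∧ f x > x ^ ρ)
    (rn : ℝ) (hrn : s < rn) (M : ℕ) :
    ∃ l : ℕ, M < l ∧ f ((2:ℝ) ^ (-(l:ℝ))) > (2:ℝ) ^ (-((l:ℝ) * rn)) := by
  set ρ : ℝ := min ((s + rn)/2) ((s+1)/2) with hρdef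
  have hρs : s < ρ := lt_min (by linarith) (by linarith)
  have hρ1 : ρ < 1 := lt_of_le_of_lt (min_le_right _ _) (by linarith)
  have hρrn : ρ < rn := lt_of_le_of_lt (min_le_left _ _) (by linarith)
  have hρ0 : 0 < ρ := lt_of_le_of_lt hs0 hρs
  set δ : ℝ := rn - ρ with hδdef
  have hδ : 0 < δ := by rw [hδdef]; linarith
  set L : ℕ := max M ⌈(1-ρ)/δ⌉₊ with hLdef
  obtain ⟨x, hx0, hxe, hxf⟩ := hbig ρ hρs hρ1.le ((2:ℝ)^(-(L:ℝ))) (by positivity)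
  have hxinv : (2:ℝ)^(L:ℝ) < x⁻¹ := by
    rw [Real.rpow_neg (by norm_num)] at hxe
    exact (lt_inv_comm₀ hx0 (by positivity)).mp hxe
  have hlog : (L:ℝ) < Real.logb 2 x⁻¹ :=
    (Real.lt_logb_iff_rpow_lt (by norm_num) (inv_pos.2 hx0)).2 hxinv
  set l : ℕ := ⌈Real.logb 2 x⁻¹⌉₊ with hldef
  have hlogle : Real.logb 2 x⁻¹ ≤ (l:ℝ) := Nat.le_ceil _
  have hLl : (L:ℝ) < (l:ℝ) := lt_of_lt_of_le hlog hlogle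
  have hLl' : L < l := by exact_mod_cast hLl
  have hMl : M < l := lt_of_le_of_lt (le_max_left _ _) hLl'
  have hlt : (l:ℝ) < Real.logb 2 x⁻¹ + 1 :=
    Nat.ceil_lt_add_one (le_of_lt (lt_of_le_of_lt (Nat.cast_nonneg L) hlog))
  have h2log : (2:ℝ) ^ (Real.logb 2 x⁻¹) = x⁻¹ :=
    Real.rpow_logb (by norm_num) (by norm_num) (inv_pos.2 hx0)
  have hx2 : (2:ℝ)^(-(Real.logb 2 x⁻¹)) = x := by
    rw [Real.rpow_neg (by norm_num), h2log, inv_inv]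
  have hyx : (2:ℝ)^(-(l:ℝ)) ≤ x := by
    have h1 : (2:ℝ)^(-(l:ℝ)) ≤ (2:ℝ)^(-(Real.logb 2 x⁻¹)) :=
      Real.rpow_le_rpow_of_exponent_le one_le_two (by linarith)
    rwa [hx2] at h1
  have hxy : x < (2:ℝ)^(1-(l:ℝ)) := by
    have h1 : (2:ℝ)^(-(Real.logb 2 x⁻¹)) < (2:ℝ)^(1-(l:ℝ)) :=
      Real.rpow_lt_rpow_of_exponent_lt one_lt_two (by linarith)
    rwa [hx2] at h1
  set y : ℝ := (2:ℝ)^(-(l:ℝ)) with hydef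
  have hy0 : (0:ℝ) < y := by positivity
  have hmono : f x / x ≤ f y / y := hdec (mem_Ioi.2 hy0) (mem_Ioi.2 hx0) hyx
  have hfy : f x / x * y ≤ f y := by
    have := mul_le_mul_of_nonneg_right hmono hy0.le
    rwa [div_mul_cancel₀ _ hy0.ne'] at this
  have hstep1 : x ^ (ρ-1) * y < f y := by
    refine lt_of_lt_of_le ?_ hfy
    have h1 : x ^ ρ / x * y < f x / x * y := by gcongr
    rwa [← Real.rpow_sub_one hx0.ne'] at h1
  have hstep2 : (2:ℝ) ^ ((1-(l:ℝ))*(ρ-1)) * y < x ^ (ρ-1) * y := by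
    apply mul_lt_mul_of_pos_right _ hy0
    rw [Real.rpow_mul (by norm_num : (0:ℝ) ≤ 2)]
    exact Real.rpow_lt_rpow_of_neg hx0 hxy (by linarith)
  have hcomb : (2:ℝ) ^ ((1-(l:ℝ))*(ρ-1) + -(l:ℝ)) < f y := by
    rw [Real.rpow_add (by norm_num : (0:ℝ) < 2), ← hydef]
    exact lt_trans hstep2 hstep1
  refine ⟨l, hMl, lt_of_le_of_lt ?_ hcomb⟩
  apply Real.rpow_le_rpow_of_exponent_le one_le_two
  have hceil : (1-ρ)/δ ≤ (L:ℝ) := le_trans (Nat.le_ceil _) (by exact_mod_cast Nat.cast_le.mpr (le_max_right M ⌈(1-ρ)/δ⌉₊))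
  have hdl : (1-ρ) ≤ (l:ℝ) * δ := by
    have h1 : (1-ρ)/δ ≤ (l:ℝ) := le_trans hceil hLl.le
    calc 1-ρ = (1-ρ)/δ * δ := by field_simp
    _ ≤ (l:ℝ) * δ := mul_le_mul_of_nonneg_right h1 hδ.le
  have hring : (l:ℝ) * δ = (l:ℝ)*rn - (l:ℝ)*ρ := by rw [hδdef]; ring
  nlinarith [hdl, hring]

/-- construction of the sequences `(l_n)` and `(r_n^*)`. -/
theorem stmt19 (s : ℝ) (hs0 : 0 ≤ s) (hs1 : s < 1)
    (f : ℝ → ℝ) (hf : IsGauge f) (hdec : RatioDecreasing f)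
    (hbig : ∀ ρ : ℝ, s < ρ → ρ ≤ 1 → ∀ ε : ℝ, 0 < ε → ∃ x : ℝ, 0 < x ∧ x < ε ∧ f x > x ^ ρ)
    (r : ℕ → ℝ) (hra : StrictAnti r) (hrs : ∀ n, s < r n)
    (hrt : Filter.Tendsto r Filter.atTop (nhds s)) :
    ∃ l : ℕ → ℕ, ∃ rs : ℕ → ℝ,
      l 0 = 0 ∧ (∀ n : ℕ, 2 ^ n + l n < l (n + 1)) ∧
      (∀ n : ℕ, rs n = (⌈r n * (l (n + 1) : ℝ)⌉ : ℝ) / (l (n + 1) : ℝ)) ∧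
      Antitone rs ∧ Filter.Tendsto rs Filter.atTop (nhds s) ∧
      ∀ n : ℕ, f ((2 : ℝ) ^ (-(l (n + 1) : ℝ)))
        > (2 : ℝ) ^ (-((l (n + 1) : ℝ) * rs n)) := by
  have key : ∀ n M : ℕ, ∃ L : ℕ, M < L ∧ f ((2:ℝ)^(-(L:ℝ))) > (2:ℝ)^(-((L:ℝ) * r n)) :=
    fun n M => key19 s hs0 hs1 f hdec hbig (r n) (hrs n) M
  set N : ℕ → ℕ := fun n => Nat.rec 0 (fun k _ => ⌈(r k - r (k+1))⁻¹⌉₊) n with hNdef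
  have H : ∀ n prev : ℕ, ∃ L : ℕ, 2^n + prev < L ∧ N n ≤ L ∧
      f ((2:ℝ)^(-(L:ℝ))) > (2:ℝ)^(-((L:ℝ) * r n)) := by
    intro n prev
    obtain ⟨L, hL1, hL2⟩ := key n (max (2^n + prev) (N n))
    exact ⟨L, lt_of_le_of_lt (le_max_left _ _) hL1,
      le_of_lt (lt_of_le_of_lt (le_max_right _ _) hL1), hL2⟩
  choose g hg1 hg2 hg3 using H
  set l : ℕ → ℕ := fun n => Nat.rec 0 (fun k prev => g k prev) n with hldef
  have hl1 : ∀ n, 2^n + l n < l (n+1) := fun n => hg1 n (l n)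
  have hlN : ∀ n, N n ≤ l (n+1) := fun n => hg2 n (l n)
  have hlf : ∀ n, f ((2:ℝ)^(-(l (n+1):ℝ))) > (2:ℝ)^(-((l (n+1):ℝ) * r n)) :=
    fun n => hg3 n (l n)
  have hln : ∀ n, n < l (n+1) := fun n =>
    lt_trans (Nat.lt_two_pow_self (n := n)) (lt_of_le_of_lt (Nat.le_add_right _ _) (hl1 n))
  have hLpos : ∀ n, (0:ℝ) < (l (n+1):ℝ) := fun n =>
    Nat.cast_pos.2 ((Nat.zero_le n).trans_lt (hln n))
  set rs : ℕ → ℝ := fun n => (⌈r n * (l (n+1) : ℝ)⌉ : ℝ) / (l (n+1) : ℝ) with hrsdef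
  have hrsge : ∀ n, r n ≤ rs n := by
    intro n
    rw [hrsdef, le_div_iff₀ (hLpos n)]
    exact Int.le_ceil _
  have hrsle : ∀ n, rs n ≤ r n + 1/(l (n+1):ℝ) := by
    intro n
    rw [hrsdef, div_le_iff₀ (hLpos n)]
    have h1 := Int.ceil_lt_add_one (r n * (l (n+1):ℝ))
    have h2 : (r n + 1/(l (n+1):ℝ)) * (l (n+1):ℝ) = r n * (l (n+1):ℝ) + 1 := by
      rw [add_mul, one_div, inv_mul_cancel₀ (hLpos n).ne']
    linarith
  have hanti : Antitone rs := by
    apply antitone_nat_of_succ_le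
    intro n
    have hd : (0:ℝ) < r n - r (n+1) := by have := hra (Nat.lt_succ_self n); linarith
    have hN1 : ((r n - r (n+1))⁻¹ : ℝ) ≤ (l (n+2):ℝ) := by
      have h0 : N (n+1) = ⌈(r n - r (n+1))⁻¹⌉₊ := rfl
      have := hlN (n+1)
      rw [h0] at this
      exact le_trans (Nat.le_ceil _) (by exact_mod_cast this)
    have hinv : (1:ℝ)/(l (n+2):ℝ) ≤ r n - r (n+1) := by
      rw [div_le_iff₀ (hLpos (n+1))]
      rw [inv_le_iff_one_le_mul₀ hd] at hN1
      linarith [hN1]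
    calc rs (n+1) ≤ r (n+1) + 1/(l (n+2):ℝ) := hrsle (n+1)
      _ ≤ r n := by linarith
      _ ≤ rs n := hrsge n
  have hl1' : Tendsto (fun n => (l (n+1):ℝ)) atTop atTop := by
    apply tendsto_natCast_atTop_atTop.comp
    exact tendsto_atTop_mono (fun n => Nat.succ_le_of_lt (hln n))
      (tendsto_add_atTop_nat 1)
  have hinv0 : Tendsto (fun n => 1/(l (n+1):ℝ)) atTop (nhds 0) := by
    simp only [one_div]; exact hl1'.inv_tendsto_atTop
  have htend : Tendsto rs atTop (nhds s) := by
    have hupper : Tendsto (fun n => r n + 1/(l (n+1):ℝ)) atTop (nhds (s + 0)) :=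
      hrt.add hinv0
    rw [add_zero] at hupper
    exact tendsto_of_tendsto_of_tendsto_of_le_of_le hrt hupper hrsge hrsle
  refine ⟨l, rs, rfl, hl1, fun n => rfl, hanti, htend, ?_⟩
  intro n
  have hEq : (l (n+1):ℝ) * rs n = (⌈r n * (l (n+1):ℝ)⌉ : ℝ) := by
    rw [hrsdef]
    field_simp
    exact mul_div_cancel_left₀ _ (hLpos n).ne'
  rw [hEq]
  refine lt_of_le_of_lt ?_ (hlf n)
  apply Real.rpow_le_rpow_of_exponent_le one_le_two
  have := Int.le_ceil (r n * (l (n+1):ℝ))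
  have hc : (l (n+1):ℝ) * r n = r n * (l (n+1):ℝ) := mul_comm _ _
  linarith
end
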